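/- arXiv:1604.07475 — 9 statements merged into one kernel-verified Lean document; each statement's English description precedes it below -/
import Mathlib

section
/- Let (G,p) be a framework in ℝ^d whose points p do not all lie in an affine hyperplane, and let p' be an infinitesimal flex of (G,p). Then (1) for every edge {i,j} of G, ‖(p i + p' i) − (p j + p' j)‖ = ‖(p i − p' i) − (p j − p' j)‖; and (2) the configuration p + p' is congruent to p − p' (there is an isometry of ℝ^d taking one to the other) if and only if p' is a trivial infinitesimal flex. -/
open scoped InnerProductSpace

/-- A configuration of `n` points in `ℝ^d`. -/
abbrev Config (n d : ℕ) := Fin n → EuclideanSpace ℝ (Fin d)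

/-- Two configurations are congruent if some isometry of `ℝ^d` takes one to the other. -/
def ConfigCongruent {n d : ℕ} (q p : Config n d) : Prop :=
  ∃ T : EuclideanSpace ℝ (Fin d) ≃ᵢ EuclideanSpace ℝ (Fin d), ∀ i, T (q i) = p i

/-- An infinitesimal flex of the framework `(G,p)`. -/
def IsFlex {n d : ℕ} (G : SimpleGraph (Fin n)) (p p' : Config n d) : Prop :=
  ∀ i j, G.Adj i j → ⟪p i - p j, p' i - p' j⟫_ℝ = 0

/-- A trivial infinitesimal flex: `p' i = S (p i) + t` with `S` skew-symmetric. -/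
def IsTrivialFlex {n d : ℕ} (p p' : Config n d) : Prop :=
  ∃ S : EuclideanSpace ℝ (Fin d) →ₗ[ℝ] EuclideanSpace ℝ (Fin d),
    (∀ x y, ⟪S x, y⟫_ℝ = -⟪x, S y⟫_ℝ) ∧ ∃ t, ∀ i, p' i = S (p i) + t

/-- `(G,p)` is infinitesimally rigid in `ℝ^d` if every infinitesimal flex is trivial. -/
def InfinitesimallyRigid {n d : ℕ} (G : SimpleGraph (Fin n)) (p : Config n d) : Prop :=
  ∀ p', IsFlex G p p' → IsTrivialFlex p p'

section Aux

variable {d : ℕ}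

lemma skew_inner_self (S : EuclideanSpace ℝ (Fin d) →ₗ[ℝ] EuclideanSpace ℝ (Fin d))
    (hS : ∀ x y, ⟪S x, y⟫_ℝ = -⟪x, S y⟫_ℝ) (x : EuclideanSpace ℝ (Fin d)) :
    ⟪S x, x⟫_ℝ = 0 := by
  have h := hS x x
  have h2 : ⟪x, S x⟫_ℝ = ⟪S x, x⟫_ℝ := real_inner_comm _ _
  linarith

lemma onePlus_bijective (S : EuclideanSpace ℝ (Fin d) →ₗ[ℝ] EuclideanSpace ℝ (Fin d))
    (hS : ∀ x y, ⟪S x, y⟫_ℝ = -⟪x, S y⟫_ℝ) :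
    Function.Bijective ((LinearMap.id : EuclideanSpace ℝ (Fin d) →ₗ[ℝ] EuclideanSpace ℝ (Fin d)) + S) := by
  have hinj : Function.Injective ((LinearMap.id : EuclideanSpace ℝ (Fin d) →ₗ[ℝ] EuclideanSpace ℝ (Fin d)) + S) := by
    rw [← LinearMap.ker_eq_bot, LinearMap.ker_eq_bot']
    intro x hx
    have hx' : x + S x = 0 := by simpa using hx
    have h0 : ⟪x + S x, x⟫_ℝ = 0 := by rw [hx']; simp
    rw [inner_add_left, skew_inner_self S hS, add_zero, real_inner_self_eq_norm_sq] at h0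
    have : ‖x‖ = 0 := by nlinarith [norm_nonneg x]
    simpa using this
  exact ⟨hinj, (LinearMap.injective_iff_surjective).mp hinj⟩

lemma cayley_norm (S : EuclideanSpace ℝ (Fin d) →ₗ[ℝ] EuclideanSpace ℝ (Fin d))
    (hS : ∀ x y, ⟪S x, y⟫_ℝ = -⟪x, S y⟫_ℝ) (y : EuclideanSpace ℝ (Fin d)) :
    ‖y - S y‖ = ‖y + S y‖ := by
  have h0 : ⟪y, S y⟫_ℝ = 0 := by rw [real_inner_comm]; exact skew_inner_self S hS y
  have h1 : ‖y - S y‖ ^ 2 = ‖y + S y‖ ^ 2 := by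
    rw [norm_sub_sq_real, norm_add_sq_real, h0]
    ring
  have := congrArg Real.sqrt h1
  simpa [Real.sqrt_sq (norm_nonneg _)] using this

end Aux

section Main

variable {d : ℕ}

local notation "E" => EuclideanSpace ℝ (Fin d)

lemma trivial_to_congruent {n : ℕ} (p p' : Config n d) (h : IsTrivialFlex p p') :
    ConfigCongruent (fun i => p i + p' i) (fun i => p i - p' i) := by
  obtain ⟨S, hS, t, ht⟩ := h
  have hnegS : ∀ x y : E, ⟪(-S) x, y⟫_ℝ = -⟪x, (-S) y⟫_ℝ := by
    intro x y
    simp only [LinearMap.neg_apply, inner_neg_left, inner_neg_right, hS x y, neg_neg]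
  let B := LinearEquiv.ofBijective _ (onePlus_bijective S hS)
  let C := LinearEquiv.ofBijective _ (onePlus_bijective (-S) hnegS)
  have hBapp : ∀ x : E, B x = x + S x := fun x => by
    simp [B, LinearEquiv.ofBijective_apply]
  have hCapp : ∀ x : E, C x = x - S x := fun x => by
    simp [C, LinearEquiv.ofBijective_apply, sub_eq_add_neg]
  have hnorm : ∀ x : E, ‖(B.symm.trans C) x‖ = ‖x‖ := by
    intro x
    have hx : B (B.symm x) = x := B.apply_symm_apply x
    rw [hBapp] at hx
    calc ‖(B.symm.trans C) x‖ = ‖C (B.symm x)‖ := rfl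
      _ = ‖B.symm x - S (B.symm x)‖ := by rw [hCapp]
      _ = ‖B.symm x + S (B.symm x)‖ := cayley_norm S hS _
      _ = ‖x‖ := by rw [hx]
  let L : E ≃ₗᵢ[ℝ] E := ⟨B.symm.trans C, hnorm⟩
  refine ⟨((IsometryEquiv.addRight (-t)).trans L.toIsometryEquiv).trans
    (IsometryEquiv.addRight (-t)), ?_⟩
  intro i
  have hL : ∀ x : E, L x = C (B.symm x) := fun _ => rfl
  have step : L (p i + p' i + -t) = p i - S (p i) := by
    have h1 : p i + p' i + -t = B (p i) := by rw [hBapp, ht i]; abel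
    rw [h1]
    have := B.symm_apply_apply (p i)
    rw [hL, this, hCapp]
  simp only [IsometryEquiv.trans_apply, IsometryEquiv.addRight_apply,
    LinearIsometryEquiv.coe_toIsometryEquiv]
  rw [step, ht i]
  abel

lemma congruent_to_trivial {n : ℕ} (p p' : Config n d)
    (hspan : ¬ ∃ (f : E →ₗ[ℝ] ℝ) (c : ℝ), f ≠ 0 ∧ ∀ i, f (p i) = c)
    (h : ConfigCongruent (fun i => p i + p' i) (fun i => p i - p' i)) :
    IsTrivialFlex p p' := by
  obtain ⟨T, hT⟩ := h
  set A := T.toRealLinearIsometryEquiv with hAdef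
  set c : E := T 0 with hc
  have hA : ∀ x : E, T x = A x + c := by
    intro x
    have := T.toRealLinearIsometryEquiv_apply x
    rw [hAdef]
    rw [this]
    abel
  have key : ∀ i, p' i + A (p' i) = p i - A (p i) - c := by
    intro i
    have h1 : T (p i + p' i) = p i - p' i := hT i
    rw [hA, map_add] at h1
    have h2 : A (p i) + A (p' i) + c = p i - p' i := by
      simpa using h1
    linear_combination (norm := module) h2
  have hAinner : ∀ x y : E, ⟪A x, A y⟫_ℝ = ⟪x, y⟫_ℝ := fun x y =>
    A.inner_map_map x y
  let ALm : E →ₗ[ℝ] E := ↑A.toLinearEquiv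
  have hALm : ∀ x : E, ALm x = A x := fun _ => rfl
  let M : E →ₗ[ℝ] E := LinearMap.id + ALm
  have hMapp : ∀ x : E, M x = x + A x := fun x => by
    simp [M, hALm]
  have hMinj : Function.Injective M := by
    rw [← LinearMap.ker_eq_bot, LinearMap.ker_eq_bot']
    intro v hv
    by_contra hv0
    have hAv : A v = -v := by
      have : v + A v = 0 := by rw [← hMapp]; exact hv
      linear_combination (norm := module) this
    have hvAx : ∀ x : E, ⟪v, A x⟫_ℝ = -⟪v, x⟫_ℝ := by
      intro x
      calc ⟪v, A x⟫_ℝ = -⟪A v, A x⟫_ℝ := by rw [hAv]; simp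
        _ = -⟪v, x⟫_ℝ := by rw [hAinner]
    apply hspan
    refine ⟨(innerSL ℝ v).toLinearMap, ⟪v, c⟫_ℝ / 2, ?_, ?_⟩
    · intro hf
      have : ⟪v, v⟫_ℝ = 0 := by
        have := congrArg (fun g => g v) (congrArg DFunLike.coe hf)
        simpa using this
      exact hv0 (inner_self_eq_zero.mp this)
    · intro i
      have hk := key i
      have h3 : ⟪v, p' i + A (p' i)⟫_ℝ = ⟪v, p i - A (p i) - c⟫_ℝ := by rw [hk]
      rw [inner_add_right, hvAx, inner_sub_right, inner_sub_right, hvAx] at h3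
      simp only [ContinuousLinearMap.coe_coe, innerSL_apply_apply]
      linarith
  have hMbij : Function.Bijective M :=
    ⟨hMinj, (LinearMap.injective_iff_surjective).mp hMinj⟩
  let ME := LinearEquiv.ofBijective M hMbij
  let N : E →ₗ[ℝ] E := LinearMap.id - ALm
  have hNapp : ∀ x : E, N x = x - A x := fun x => by
    simp [N, hALm]
  let S : E →ₗ[ℝ] E := (↑ME.symm : E →ₗ[ℝ] E) ∘ₗ N
  have hMN : ∀ u : E, M (N u) = N (M u) := by
    intro u
    simp only [hMapp, hNapp, map_sub, map_add]
    abel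
  have hSM : ∀ u : E, S (u + A u) = u - A u := by
    intro u
    have h1 : S (u + A u) = ME.symm (N (M u)) := by
      simp only [S, LinearMap.comp_apply, hMapp]
      rfl
    rw [h1, ← hMN]
    have : ME (N u) = M (N u) := rfl
    rw [← this, ME.symm_apply_apply, hNapp]
  have hskew : ∀ x y : E, ⟪S x, y⟫_ℝ = -⟪x, S y⟫_ℝ := by
    intro x y
    obtain ⟨u, hu⟩ := hMbij.2 x
    obtain ⟨w, hw⟩ := hMbij.2 y
    rw [hMapp] at hu hw
    subst hu hw
    rw [hSM, hSM]
    rw [inner_sub_left, inner_add_right, inner_add_right, inner_add_left,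
      inner_sub_right, inner_sub_right]
    have h5 := hAinner u w
    have h6 := real_inner_comm (A u) w
    have h7 := real_inner_comm u (A w)
    have h8 := real_inner_comm u w
    linarith
  refine ⟨S, hskew, -(ME.symm c), ?_⟩
  intro i
  have hk := key i
  have hM' : M (p' i) = N (p i) - c := by
    rw [hMapp, hNapp]
    linear_combination (norm := module) hk
  have : ME (p' i) = N (p i) - c := hM'
  have h9 : p' i = ME.symm (N (p i) - c) := by
    rw [← this, ME.symm_apply_apply]
  rw [h9, map_sub]
  show ME.symm (N (p i)) - ME.symm c = S (p i) + -(ME.symm c)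
  simp only [S, LinearMap.comp_apply, LinearEquiv.coe_coe]
  abel

end Main

/-- Averaging/de-averaging: if `p'` is an infinitesimal flex of `(G,p)` and the points
of `p` do not all lie in an affine hyperplane, then `p + p'` and `p - p'` have the same
edge lengths, and they are congruent iff `p'` is a trivial flex. -/
theorem flex_pushpull (n d : ℕ) (G : SimpleGraph (Fin n)) (p p' : Config n d)
    (hspan : ¬ ∃ (f : EuclideanSpace ℝ (Fin d) →ₗ[ℝ] ℝ) (c : ℝ),
      f ≠ 0 ∧ ∀ i, f (p i) = c)
    (hflex : IsFlex G p p') :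
    (∀ i j, G.Adj i j →
      ‖(p i + p' i) - (p j + p' j)‖ = ‖(p i - p' i) - (p j - p' j)‖) ∧
    (ConfigCongruent (fun i => p i + p' i) (fun i => p i - p' i) ↔ IsTrivialFlex p p') := by
  constructor
  · intro i j hij
    have h := hflex i j hij
    have e1 : (p i + p' i) - (p j + p' j) = (p i - p j) + (p' i - p' j) := by abel
    have e2 : (p i - p' i) - (p j - p' j) = (p i - p j) - (p' i - p' j) := by abel
    rw [e1, e2]
    have h1 : ‖(p i - p j) + (p' i - p' j)‖ ^ 2 = ‖(p i - p j) - (p' i - p' j)‖ ^ 2 := by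
      rw [norm_add_sq_real (p i - p j) (p' i - p' j),
        norm_sub_sq_real (p i - p j) (p' i - p' j), h]
      ring
    have := congrArg Real.sqrt h1
    simpa [Real.sqrt_sq (norm_nonneg _)] using this
  · exact ⟨congruent_to_trivial p p' hspan, trivial_to_congruent p p'⟩
end

section
/- Let G be a graph on Fin n and fix d. The set IR of configurations p : Fin n → ℝ^d such that (G,p) is infinitesimally rigid in ℝ^d is open in the Euclidean topology on configuration space; moreover, if IR is nonempty then IR is dense in configuration space. -/
open scoped InnerProductSpace

open scoped Classical
open Matrix

namespace RigidAux

variable {n d : ℕ}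

noncomputable def RM (G : SimpleGraph (Fin n)) (p : Config n d) :
    Matrix (Fin n × Fin n) (Fin n × Fin d) ℝ :=
  Matrix.of fun r c =>
    if G.Adj r.1 r.2 then
      ((if c.1 = r.1 then (1:ℝ) else 0) - (if c.1 = r.2 then 1 else 0)) * (p r.1 c.2 - p r.2 c.2)
    else 0

noncomputable def PM (p : Config n d) :
    Matrix (Fin n × Fin d) ((Fin d × Fin d) ⊕ Fin d) ℝ :=
  Matrix.of fun r c =>
    Sum.elim
      (fun ab => (if r.2 = ab.1 then p r.1 ab.2 else 0) - (if r.2 = ab.2 then p r.1 ab.1 else 0))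
      (fun a => if r.2 = a then (1:ℝ) else 0) c

noncomputable def BM (G : SimpleGraph (Fin n)) (p : Config n d) :
    Matrix ((Fin n × Fin n) ⊕ ((Fin d × Fin d) ⊕ Fin d)) (Fin n × Fin d) ℝ :=
  Matrix.of fun r c => Sum.elim (fun r1 => RM G p r1 c) (fun r2 => (PM p)ᵀ r2 c) r

noncomputable def rig (G : SimpleGraph (Fin n)) (p : Config n d) : ℝ :=
  ((BM G p)ᵀ * BM G p).det

def toV (p' : Config n d) : Fin n × Fin d → ℝ := fun ic => p' ic.1 ic.2

noncomputable def toC (v : Fin n × Fin d → ℝ) : Config n d :=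
  fun i => (WithLp.equiv 2 (Fin d → ℝ)).symm (fun k => v (i, k))

lemma toV_toC (v : Fin n × Fin d → ℝ) : toV (toC v) = v := by
  funext ic; rfl

lemma mulVec_RM (G : SimpleGraph (Fin n)) (p : Config n d) (x : Fin n × Fin d → ℝ)
    (i j : Fin n) :
    ((RM G p) *ᵥ x) (i, j) =
      if G.Adj i j then ∑ k, (p i k - p j k) * (x (i, k) - x (j, k)) else 0 := by
  simp only [Matrix.mulVec, dotProduct, RM, Matrix.of_apply]
  split_ifs with h
  · have hij : i ≠ j := G.ne_of_adj h
    rw [Fintype.sum_prod_type, Finset.sum_comm]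
    refine Finset.sum_congr rfl fun k _ => ?_
    have : ∀ a : Fin n, ((if a = i then (1:ℝ) else 0) - (if a = j then 1 else 0)) *
        (p i k - p j k) * x (a, k) =
        (if a = i then (p i k - p j k) * x (a,k) else 0) -
        (if a = j then (p i k - p j k) * x (a,k) else 0) := by
      intro a
      split_ifs with h1 h2
      · exact absurd (h1 ▸ h2) hij
      · ring
      · ring
      · ring
    simp only [this, Finset.sum_sub_distrib, Finset.sum_ite_eq' Finset.univ,
      Finset.mem_univ, if_true]
    ring
  · simp

lemma mulVec_PM (p : Config n d) (u : (Fin d × Fin d) ⊕ Fin d → ℝ) (i : Fin n) (k : Fin d) :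
    ((PM p) *ᵥ u) (i, k) =
      (∑ l, (u (Sum.inl (k, l)) - u (Sum.inl (l, k))) * p i l) + u (Sum.inr k) := by
  simp only [Matrix.mulVec, dotProduct, PM, Matrix.of_apply]
  rw [Fintype.sum_sum_type]
  simp only [Sum.elim_inl, Sum.elim_inr]
  congr 1
  · rw [Fintype.sum_prod_type]
    have step : ∀ a b : Fin d,
        ((if k = a then p i b else 0) - (if k = b then p i a else 0)) * u (Sum.inl (a, b)) =
        (if k = a then p i b * u (Sum.inl (a,b)) else 0)
          - (if k = b then p i a * u (Sum.inl (a,b)) else 0) := by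
      intro a b; split_ifs <;> ring
    simp only [step, Finset.sum_sub_distrib]
    rw [Finset.sum_comm (f := fun a b => if k = a then p i b * u (Sum.inl (a,b)) else 0)]
    simp only [Finset.sum_ite_eq Finset.univ k, Finset.mem_univ, if_true,
      Finset.sum_ite_irrel, Finset.sum_const_zero]
    rw [← Finset.sum_sub_distrib]
    refine Finset.sum_congr rfl fun l _ => ?_
    ring
  · have : ∀ a : Fin d, (if k = a then (1:ℝ) else 0) * u (Sum.inr a) =
        if k = a then u (Sum.inr a) else 0 := by
      intro a; split_ifs <;> simp
    simp only [this, Finset.sum_ite_eq Finset.univ k, Finset.mem_univ, if_true]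


lemma euc_sum_apply {ι : Type*} (s : Finset ι) (f : ι → EuclideanSpace ℝ (Fin d))
    (k : Fin d) : (∑ i ∈ s, f i) k = ∑ i ∈ s, f i k := by
  induction s using Finset.induction with
  | empty => simp
  | insert _ _ h ih => rw [Finset.sum_insert h, Finset.sum_insert h, PiLp.add_apply, ih]

lemma euc_decomp (x : EuclideanSpace ℝ (Fin d)) :
    x = ∑ l, x l • EuclideanSpace.single l (1:ℝ) := by
  ext k; rw [euc_sum_apply]; simp [EuclideanSpace.single_apply]

lemma isFlex_iff (G : SimpleGraph (Fin n)) (p p' : Config n d) :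
    IsFlex G p p' ↔ (RM G p) *ᵥ (toV p') = 0 := by
  have key : ∀ i j, ⟪p i - p j, p' i - p' j⟫_ℝ =
      ∑ k, (p i k - p j k) * (toV p' (i, k) - toV p' (j, k)) := by
    intro i j
    simp only [PiLp.inner_apply, RCLike.inner_apply, conj_trivial, PiLp.sub_apply, toV]
    exact Finset.sum_congr rfl fun _ _ => mul_comm _ _
  constructor
  · intro hf
    funext r
    obtain ⟨i, j⟩ := r
    rw [mulVec_RM]
    split_ifs with h
    · rw [← key]; exact hf i j h
    · rfl
  · intro h0 i j hadj
    have := congrFun h0 (i, j)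
    rw [mulVec_RM, if_pos hadj] at this
    rw [key]; exact this

lemma isTrivialFlex_iff (p p' : Config n d) :
    IsTrivialFlex p p' ↔ ∃ u, (PM p) *ᵥ u = toV p' := by
  constructor
  · rintro ⟨S, hS, t, ht⟩
    refine ⟨Sum.elim (fun ab => (1/2) * S (EuclideanSpace.single ab.2 1) ab.1)
      (fun a => t a), ?_⟩
    funext r
    obtain ⟨i, k⟩ := r
    rw [mulVec_PM]
    simp only [Sum.elim_inl, Sum.elim_inr]
    have skew : ∀ a b : Fin d, S (EuclideanSpace.single b 1) a
        = - S (EuclideanSpace.single a 1) b := by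
      intro a b
      have := hS (EuclideanSpace.single b (1:ℝ)) (EuclideanSpace.single a (1:ℝ))
      simp only [EuclideanSpace.inner_single_right, EuclideanSpace.inner_single_left,
        conj_trivial, one_mul] at this
      exact this
    have hsum : ∀ l, ((1/2) * S (EuclideanSpace.single l 1) k
          - (1/2) * S (EuclideanSpace.single k 1) l) = S (EuclideanSpace.single l 1) k := by
      intro l; rw [skew l k]; ring
    have hSp : ∀ i : Fin n, S (p i) k = ∑ l, S (EuclideanSpace.single l 1) k * p i l := by
      intro i
      conv_lhs => rw [euc_decomp (p i)]
      rw [map_sum, euc_sum_apply]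
      refine Finset.sum_congr rfl fun l _ => ?_
      rw [LinearMap.map_smul, PiLp.smul_apply, smul_eq_mul, mul_comm]
    simp only [hsum]
    rw [← hSp i]
    simp only [toV]
    rw [ht i, PiLp.add_apply]
  · rintro ⟨u, hu⟩
    set a : Fin d → Fin d → ℝ := fun k l => u (Sum.inl (k, l)) - u (Sum.inl (l, k)) with ha
    have hanti : ∀ k l, a l k = - a k l := by intro k l; simp only [ha]; ring
    refine ⟨{ toFun := fun x => (WithLp.equiv 2 _).symm (fun k => ∑ l, a k l * x l)
              map_add' := ?_
              map_smul' := ?_ }, ?_, ?_⟩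
    · intro x y
      ext k
      simp only [WithLp.equiv_symm_apply, PiLp.toLp_apply, PiLp.add_apply, mul_add, Finset.sum_add_distrib]
    · intro c x
      ext k
      simp only [WithLp.equiv_symm_apply, PiLp.toLp_apply, PiLp.smul_apply, smul_eq_mul, RingHom.id_apply,
        Finset.mul_sum]
      refine Finset.sum_congr rfl fun l _ => ?_
      ring
    · intro x y
      simp only [LinearMap.coe_mk, AddHom.coe_mk, PiLp.inner_apply, RCLike.inner_apply,
        conj_trivial, WithLp.equiv_symm_apply, PiLp.toLp_apply, Finset.sum_mul, Finset.mul_sum,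
        ← Finset.sum_neg_distrib]
      rw [Finset.sum_comm]
      refine Finset.sum_congr rfl fun k _ => Finset.sum_congr rfl fun l _ => ?_
      rw [hanti l k]
      ring
    · refine ⟨(WithLp.equiv 2 _).symm (fun k => u (Sum.inr k)), ?_⟩
      intro i
      ext k
      have := congrFun hu (i, k)
      rw [mulVec_PM] at this
      simp only [toV] at this
      simp only [PiLp.add_apply, LinearMap.coe_mk, AddHom.coe_mk, WithLp.equiv_symm_apply, PiLp.toLp_apply, ha]
      exact this.symm
lemma trivial_isFlex (G : SimpleGraph (Fin n)) (p p' : Config n d)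
    (h : IsTrivialFlex p p') : IsFlex G p p' := by
  obtain ⟨S, hS, t, ht⟩ := h
  intro i j _
  have h1 : p' i - p' j = S (p i - p j) := by
    rw [ht i, ht j, map_sub]; abel
  rw [h1]
  have h2 := hS (p i - p j) (p i - p j)
  have h3 : ⟪S (p i - p j), p i - p j⟫_ℝ = ⟪p i - p j, S (p i - p j)⟫_ℝ :=
    real_inner_comm _ _
  linarith [h2, h3]

lemma mulVec_BM_eq_zero (G : SimpleGraph (Fin n)) (p : Config n d) (v : Fin n × Fin d → ℝ) :
    BM G p *ᵥ v = 0 ↔ (RM G p *ᵥ v = 0 ∧ (PM p)ᵀ *ᵥ v = 0) := by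
  constructor
  · intro h
    constructor
    · funext r; exact congrFun h (Sum.inl r)
    · funext r; exact congrFun h (Sum.inr r)
  · rintro ⟨h1, h2⟩
    funext r
    cases r with
    | inl r => exact congrFun h1 r
    | inr r => exact congrFun h2 r

lemma rig_ne_zero_iff_inj (G : SimpleGraph (Fin n)) (p : Config n d) :
    rig G p ≠ 0 ↔ ∀ v : Fin n × Fin d → ℝ, BM G p *ᵥ v = 0 → v = 0 := by
  rw [rig, Ne, ← Matrix.exists_mulVec_eq_zero_iff]
  constructor
  · intro h v hv
    by_contra hne
    exact h ⟨v, hne, by rw [← Matrix.mulVec_mulVec, hv, Matrix.mulVec_zero]⟩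
  · rintro h ⟨v, hne, hv⟩
    apply hne
    apply h
    have : (BM G p *ᵥ v) ⬝ᵥ (BM G p *ᵥ v) = 0 := by
      rw [Matrix.dotProduct_mulVec, ← Matrix.transpose_transpose (BM G p),
        Matrix.vecMul_transpose, Matrix.transpose_transpose, Matrix.mulVec_mulVec, hv,
        zero_dotProduct]
    exact dotProduct_self_eq_zero.mp this


lemma inner_euc (m : Type*) [Fintype m] (x y : EuclideanSpace ℝ m) :
    ⟪x, y⟫_ℝ = ∑ r, x r * y r := by
  simp [PiLp.inner_apply, RCLike.inner_apply, conj_trivial]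
  exact Finset.sum_congr rfl fun _ _ => mul_comm _ _

lemma orth_mem_ker (p : Config n d) (z : EuclideanSpace ℝ (Fin n × Fin d))
    (hz : z ∈ (LinearMap.range (Matrix.toEuclideanLin (PM p)))ᗮ) :
    (PM p)ᵀ *ᵥ (WithLp.equiv 2 _ z) = 0 := by
  funext c
  have hm : Matrix.toEuclideanLin (PM p) ((WithLp.equiv 2 _).symm (Pi.single c 1))
      ∈ LinearMap.range (Matrix.toEuclideanLin (PM p)) := ⟨_, rfl⟩
  have h := (Submodule.mem_orthogonal _ z).mp hz _ hm
  rw [inner_euc] at h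
  simp only [Matrix.toEuclideanLin_apply, Equiv.apply_symm_apply,
    WithLp.equiv_symm_apply, PiLp.toLp_apply, Matrix.mulVec_single, mul_one] at h
  simp only [Matrix.mulVec, dotProduct, Matrix.transpose_apply, Pi.zero_apply,
    WithLp.equiv_apply]
  simpa using h

lemma range_flex (G : SimpleGraph (Fin n)) (p : Config n d)
    (y : EuclideanSpace ℝ (Fin n × Fin d))
    (hy : y ∈ LinearMap.range (Matrix.toEuclideanLin (PM p))) :
    RM G p *ᵥ (WithLp.equiv 2 _ y) = 0 := by
  obtain ⟨u, hu⟩ := hy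
  have hPM : PM p *ᵥ (WithLp.equiv 2 _ u) = WithLp.equiv 2 _ y := by
    rw [← hu]; rfl
  have htriv : IsTrivialFlex p (toC (WithLp.equiv 2 _ y)) := by
    rw [isTrivialFlex_iff, toV_toC]
    exact ⟨_, hPM⟩
  have hflex := trivial_isFlex G p _ htriv
  rw [isFlex_iff, toV_toC] at hflex
  exact hflex

lemma rig_ne_zero_iff (G : SimpleGraph (Fin n)) (p : Config n d) :
    rig G p ≠ 0 ↔ InfinitesimallyRigid G p := by
  rw [rig_ne_zero_iff_inj]
  constructor
  · intro h p' hflex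
    set x : EuclideanSpace ℝ (Fin n × Fin d) := (WithLp.equiv 2 _).symm (toV p') with hx
    set K := LinearMap.range (Matrix.toEuclideanLin (PM p)) with hK
    obtain ⟨y, hy, z, hz, hxyz⟩ := K.exists_add_mem_mem_orthogonal x
    have hzv : WithLp.equiv 2 _ z = toV p' - WithLp.equiv 2 _ y := by
      funext r
      have hxr : x r = y r + z r := by rw [hxyz]; rfl
      have hx2 : toV p' r = x r := rfl
      simp only [WithLp.equiv_apply, Pi.sub_apply]
      rw [hx2, hxr]; ring
    have hRMz : RM G p *ᵥ (WithLp.equiv 2 _ z) = 0 := by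
      rw [hzv, Matrix.mulVec_sub, range_flex G p y hy,
        (isFlex_iff G p p').mp hflex, sub_zero]
    have hPMz : (PM p)ᵀ *ᵥ (WithLp.equiv 2 _ z) = 0 := orth_mem_ker p z hz
    have hz0 : WithLp.equiv 2 _ z = 0 := by
      apply h
      rw [mulVec_BM_eq_zero]
      exact ⟨hRMz, hPMz⟩
    have hxy : toV p' = WithLp.equiv 2 _ y := by
      rw [← sub_eq_zero, ← hzv, hz0]
    rw [isTrivialFlex_iff]
    obtain ⟨u, hu⟩ := hy
    refine ⟨WithLp.equiv 2 _ u, ?_⟩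
    rw [hxy, ← hu]
    rfl
  · intro h v hv
    rw [mulVec_BM_eq_zero] at hv
    have hflex : IsFlex G p (toC v) := by
      rw [isFlex_iff, toV_toC]; exact hv.1
    obtain ⟨u, hu⟩ := (isTrivialFlex_iff p (toC v)).mp (h _ hflex)
    rw [toV_toC] at hu
    apply dotProduct_self_eq_zero.mp
    rw [← hu, Matrix.dotProduct_mulVec, ← Matrix.transpose_transpose (PM p),
      Matrix.vecMul_transpose, Matrix.transpose_transpose, hu, hv.2, zero_dotProduct]

lemma continuous_coord (i : Fin n) (k : Fin d) :
    Continuous fun p : Config n d => p i k := by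
  have h1 : Continuous fun p : Config n d => p i := continuous_apply i
  have h2 : Continuous fun x : EuclideanSpace ℝ (Fin d) => x k :=
    (continuous_apply k).comp (PiLp.continuous_ofLp (p := 2) (β := fun _ : Fin d => ℝ))
  exact h2.comp h1

lemma continuous_BM (G : SimpleGraph (Fin n)) :
    Continuous fun p : Config n d => BM G p := by
  apply continuous_matrix
  intro r c
  cases r with
  | inl r =>
    simp only [BM, RM, Matrix.of_apply, Sum.elim_inl]
    split_ifs
    all_goals try exact continuous_const
    all_goals exact continuous_const.mul ((continuous_coord _ _).sub (continuous_coord _ _))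
  | inr r =>
    simp only [BM, Matrix.of_apply, Sum.elim_inr, Matrix.transpose_apply, PM]
    cases r with
    | inl ab =>
      simp only [Sum.elim_inl]
      apply Continuous.sub
      · split_ifs
        · exact continuous_coord c.1 ab.2
        · exact continuous_const
      · split_ifs
        · exact continuous_coord c.1 ab.1
        · exact continuous_const
    | inr a =>
      simp only [Sum.elim_inr]
      exact continuous_const

lemma continuous_rig (G : SimpleGraph (Fin n)) :
    Continuous fun p : Config n d => rig G p := by
  exact Continuous.matrix_det ((continuous_BM G).matrix_transpose.matrix_mul (continuous_BM G))

lemma bm_affine (G : SimpleGraph (Fin n)) (q v : Config n d) (t : ℝ) (r) (c) :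
    BM G (q + t • v) r c = BM G q r c + t * (BM G (q + v) r c - BM G q r c) := by
  have hc : ∀ (i : Fin n) (k : Fin d), (q + t • v) i k = q i k + t * v i k := by
    intro i k
    have : (q + t • v) i = q i + t • v i := rfl
    rw [this, PiLp.add_apply, PiLp.smul_apply, smul_eq_mul]
  have hc1 : ∀ (i : Fin n) (k : Fin d), (q + v) i k = q i k + v i k := by
    intro i k
    have : (q + v) i = q i + v i := rfl
    rw [this, PiLp.add_apply]
  cases r with
  | inl r =>
    simp only [BM, RM, Matrix.of_apply, Sum.elim_inl]
    split_ifs <;> (try simp only [hc, hc1]) <;> ring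
  | inr r =>
    simp only [BM, Matrix.of_apply, Sum.elim_inr, Matrix.transpose_apply, PM]
    cases r with
    | inl ab =>
      simp only [Sum.elim_inl]
      split_ifs <;> (try simp only [hc, hc1]) <;> ring
    | inr a =>
      simp only [Sum.elim_inr]
      ring

lemma rig_line (G : SimpleGraph (Fin n)) (q v : Config n d) :
    ∃ Q : Polynomial ℝ, ∀ t : ℝ, rig G (q + t • v) = Q.eval t := by
  set Pm : Matrix ((Fin n × Fin n) ⊕ ((Fin d × Fin d) ⊕ Fin d)) (Fin n × Fin d)
      (Polynomial ℝ) := Matrix.of fun r c =>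
    Polynomial.C (BM G q r c) + Polynomial.X * Polynomial.C (BM G (q + v) r c - BM G q r c)
    with hPm
  refine ⟨(Pmᵀ * Pm).det, fun t => ?_⟩
  have hmap : Pm.map (Polynomial.eval t) = BM G (q + t • v) := by
    funext r c
    simp only [Matrix.map_apply, hPm, Matrix.of_apply, Polynomial.eval_add, Polynomial.eval_C,
      Polynomial.eval_mul, Polynomial.eval_X]
    exact (bm_affine G q v t r c).symm
  have h2 : ((Pmᵀ * Pm).det).eval t
      = ((Pm.map (Polynomial.eval t))ᵀ * (Pm.map (Polynomial.eval t))).det := by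
    rw [show ((Pmᵀ * Pm).det).eval t = (Polynomial.evalRingHom t) ((Pmᵀ * Pm).det) from rfl,
      RingHom.map_det, RingHom.mapMatrix_apply, Matrix.map_mul, Matrix.transpose_map]
    simp only [Polynomial.coe_evalRingHom]
  rw [rig, h2, hmap]

lemma dense_rig (G : SimpleGraph (Fin n)) (h : ∃ p0 : Config n d, rig G p0 ≠ 0) :
    Dense {p : Config n d | rig G p ≠ 0} := by
  obtain ⟨p0, hp0⟩ := h
  intro q
  rw [Metric.mem_closure_iff]
  intro ε hε
  set v := p0 - q with hv
  obtain ⟨Q, hQ⟩ := rig_line G q v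
  have h1 : Q.eval 1 ≠ 0 := by
    rw [← hQ 1, show q + (1:ℝ) • v = p0 from by rw [one_smul, hv]; abel]
    exact hp0
  have hQ0 : Q ≠ 0 := by intro hh; rw [hh] at h1; simp at h1
  have hδ : 0 < ε / (‖v‖ + 1) := by positivity
  have hne : ((Set.Ioo (0:ℝ) (ε / (‖v‖ + 1))) \ {x | Q.IsRoot x}).Nonempty :=
    ((Set.Ioo_infinite hδ).diff (Polynomial.finite_setOf_isRoot hQ0)).nonempty
  obtain ⟨t, htI, htr⟩ := hne
  refine ⟨q + t • v, ?_, ?_⟩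
  · show rig G (q + t • v) ≠ 0
    rw [hQ]
    exact htr
  · have hd : dist q (q + t • v) = ‖t • v‖ := by
      rw [dist_eq_norm, show q - (q + t • v) = -(t • v) from by abel, norm_neg]
    rw [hd, norm_smul, Real.norm_eq_abs, abs_of_pos htI.1]
    have h2 := htI.2
    rw [lt_div_iff₀ (by positivity)] at h2
    nlinarith [htI.1, norm_nonneg v]

end RigidAux

/-- The set of infinitesimally rigid configurations is open; if nonempty it is dense. -/
theorem infRigid_set_open_and_dense (n d : ℕ) (G : SimpleGraph (Fin n)) :
    IsOpen {p : Config n d | InfinitesimallyRigid G p} ∧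
    ({p : Config n d | InfinitesimallyRigid G p}.Nonempty →
      Dense {p : Config n d | InfinitesimallyRigid G p}) := by
  have hset : {p : Config n d | InfinitesimallyRigid G p}
      = {p : Config n d | RigidAux.rig G p ≠ 0} := by
    ext p
    exact (RigidAux.rig_ne_zero_iff G p).symm
  constructor
  · rw [hset]
    have hpre : {p : Config n d | RigidAux.rig G p ≠ 0}
        = (fun p : Config n d => RigidAux.rig G p) ⁻¹' ({0}ᶜ) := rfl
    rw [hpre]
    exact IsOpen.preimage (RigidAux.continuous_rig G) isOpen_compl_singleton
  · intro hne
    rw [hset] at hne ⊢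
    obtain ⟨p0, hp0⟩ := hne
    exact RigidAux.dense_rig G ⟨p0, hp0⟩
end

section
/- Let (G,p⁰) be a framework in ℝ^d that is infinitesimally rigid, and let ω⁰ be an equilibrium stress vector for (G,p⁰). Then for every ε > 0 there exists δ > 0 such that every configuration q : Fin n → ℝ^d with ‖q i − p⁰ i‖ < δ for all i and with (G,q) infinitesimally rigid admits an equilibrium stress vector ω with |ω e − ω⁰ e| < ε for every edge e of G. -/
open scoped InnerProductSpace

open Classical in
/-- An equilibrium stress vector for `(G,p)`: an assignment of a real number to each
edge such that every vertex is in equilibrium. -/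
def IsEquilibriumStressVector {n d : ℕ} (G : SimpleGraph (Fin n)) (p : Config n d)
    (ω : Sym2 (Fin n) → ℝ) : Prop :=
  ∀ i, ∑ j, (if G.Adj i j then ω s(i, j) • (p i - p j) else 0) = 0

namespace NES

open Finset Module

/-! ### Gram matrices -/

/-- Gram matrix of a finite family of vectors. -/
noncomputable def gramMat {E : Type*} [NormedAddCommGroup E] [InnerProductSpace ℝ E]
    {k : ℕ} (v : Fin k → E) : Matrix (Fin k) (Fin k) ℝ :=
  Matrix.of fun i j => ⟪v i, v j⟫_ℝ

lemma gramMat_mulVec {E : Type*} [NormedAddCommGroup E] [InnerProductSpace ℝ E]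
    {k : ℕ} (v : Fin k → E) (x : Fin k → ℝ) (i : Fin k) :
    (gramMat v).mulVec x i = ⟪v i, ∑ j, x j • v j⟫_ℝ := by
  simp [gramMat, Matrix.mulVec, dotProduct, inner_sum, real_inner_smul_right, mul_comm]

lemma det_gramMat_ne_zero {E : Type*} [NormedAddCommGroup E] [InnerProductSpace ℝ E]
    {k : ℕ} {v : Fin k → E} (hv : LinearIndependent ℝ v) : (gramMat v).det ≠ 0 := by
  intro h
  obtain ⟨x, hx, hmul⟩ := (Matrix.exists_mulVec_eq_zero_iff).2 h
  have hin : ∀ i, ⟪v i, ∑ j, x j • v j⟫_ℝ = 0 := by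
    intro i
    rw [← gramMat_mulVec, hmul]; rfl
  have hs : (∑ j, x j • v j) = 0 := by
    have : ⟪∑ i, x i • v i, ∑ j, x j • v j⟫_ℝ = 0 := by
      rw [sum_inner]
      exact Finset.sum_eq_zero fun i _ => by
        rw [real_inner_smul_left, hin i, mul_zero]
    exact inner_self_eq_zero.mp this
  exact hx (funext (Fintype.linearIndependent_iff.mp hv x hs))

lemma li_of_det_gramMat_ne_zero {E : Type*} [NormedAddCommGroup E] [InnerProductSpace ℝ E]
    {k : ℕ} {v : Fin k → E} (h : (gramMat v).det ≠ 0) : LinearIndependent ℝ v := by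
  rw [Fintype.linearIndependent_iff]
  intro g hg
  by_contra hne
  push_neg at hne
  obtain ⟨i, hi⟩ := hne
  apply h
  apply (Matrix.exists_mulVec_eq_zero_iff).1
  refine ⟨g, fun h0 => hi (congrFun h0 i), ?_⟩
  funext j
  rw [gramMat_mulVec, hg, inner_zero_right]; rfl

/-! ### The rigidity and stress maps -/

variable {n d : ℕ}

abbrev V (n d : ℕ) := PiLp 2 (fun _ : Fin n => EuclideanSpace ℝ (Fin d))
abbrev Y (n : ℕ) := EuclideanSpace ℝ (Fin n × Fin n)

open Classical in
/-- The rigidity map. -/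
noncomputable def rig (G : SimpleGraph (Fin n)) (q : Config n d) : V n d →ₗ[ℝ] Y n where
  toFun p' := WithLp.toLp 2 (fun ij : Fin n × Fin n => if G.Adj ij.1 ij.2 then ⟪q ij.1 - q ij.2, p' ij.1 - p' ij.2⟫_ℝ else 0)
  map_add' p' p'' := by
    ext ij : 1
    show (if _ then ⟪q ij.1 - q ij.2, (p' + p'') ij.1 - (p' + p'') ij.2⟫_ℝ else 0) =
      (if _ then ⟪q ij.1 - q ij.2, p' ij.1 - p' ij.2⟫_ℝ else 0) +
      (if _ then ⟪q ij.1 - q ij.2, p'' ij.1 - p'' ij.2⟫_ℝ else 0)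
    by_cases h : G.Adj ij.1 ij.2
    · rw [if_pos h, if_pos h, if_pos h]
      show ⟪q ij.1 - q ij.2, (p' ij.1 + p'' ij.1) - (p' ij.2 + p'' ij.2)⟫_ℝ = _
      rw [add_sub_add_comm, inner_add_right]
    · simp [h]
  map_smul' c p' := by
    ext ij : 1
    show (if _ then ⟪q ij.1 - q ij.2, (c • p') ij.1 - (c • p') ij.2⟫_ℝ else 0) = _
    by_cases h : G.Adj ij.1 ij.2
    · rw [if_pos h]
      show ⟪q ij.1 - q ij.2, c • p' ij.1 - c • p' ij.2⟫_ℝ = _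
      rw [← smul_sub, real_inner_smul_right]
      simp [h]
    · simp [h]

open Classical in
/-- The stress map (formal adjoint of the rigidity map, with symmetrization). -/
noncomputable def str (G : SimpleGraph (Fin n)) (q : Config n d) : Y n →ₗ[ℝ] V n d where
  toFun ω := WithLp.toLp 2 (fun i => ∑ j, if G.Adj i j then (ω (i, j) + ω (j, i)) • (q i - q j) else 0)
  map_add' ω ω' := by
    ext i : 1
    show (∑ j, if G.Adj i j then ((ω + ω') (i, j) + (ω + ω') (j, i)) • (q i - q j) else 0) =
      (∑ j, if G.Adj i j then (ω (i, j) + ω (j, i)) • (q i - q j) else 0) +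
      (∑ j, if G.Adj i j then (ω' (i, j) + ω' (j, i)) • (q i - q j) else 0)
    rw [← Finset.sum_add_distrib]
    refine Finset.sum_congr rfl fun j _ => ?_
    by_cases h : G.Adj i j
    · rw [if_pos h, if_pos h, if_pos h]
      show (ω (i, j) + ω' (i, j) + (ω (j, i) + ω' (j, i))) • (q i - q j) = _
      rw [← add_smul]; ring_nf
    · simp [h]
  map_smul' c ω := by
    ext i : 1
    show (∑ j, if G.Adj i j then ((c • ω) (i, j) + (c • ω) (j, i)) • (q i - q j) else 0) = _
    show _ = c • ∑ j, if G.Adj i j then (ω (i, j) + ω (j, i)) • (q i - q j) else 0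
    rw [Finset.smul_sum]
    refine Finset.sum_congr rfl fun j _ => ?_
    by_cases h : G.Adj i j
    · rw [if_pos h, if_pos h]
      show (c * ω (i, j) + c * ω (j, i)) • (q i - q j) = _
      rw [← mul_add, mul_smul]
    · simp [h]

open Classical in
lemma rig_apply (G : SimpleGraph (Fin n)) (q : Config n d) (p' : V n d) (ij : Fin n × Fin n) :
    rig G q p' ij =
      if G.Adj ij.1 ij.2 then ⟪q ij.1 - q ij.2, p' ij.1 - p' ij.2⟫_ℝ else 0 := rfl

open Classical in
lemma str_apply (G : SimpleGraph (Fin n)) (q : Config n d) (ω : Y n) (i : Fin n) :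
    str G q ω i = ∑ j, if G.Adj i j then (ω (i, j) + ω (j, i)) • (q i - q j) else 0 := rfl

lemma pairing (G : SimpleGraph (Fin n)) (q : Config n d) (ω : Y n) (p' : V n d) :
    ⟪str G q ω, p'⟫_ℝ = ⟪ω, rig G q p'⟫_ℝ := by
  classical
  rw [PiLp.inner_apply, PiLp.inner_apply]
  have lhs : ∀ i, ⟪str G q ω i, p' i⟫_ℝ =
      ∑ j, if G.Adj i j then (ω (i, j) + ω (j, i)) * ⟪q i - q j, p' i⟫_ℝ else 0 := by
    intro i
    rw [str_apply, sum_inner]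
    refine Finset.sum_congr rfl fun j _ => ?_
    by_cases h : G.Adj i j
    · rw [if_pos h, if_pos h, real_inner_smul_left]
    · simp [h]
  calc ∑ i, ⟪str G q ω i, p' i⟫_ℝ
      = ∑ i, ∑ j, if G.Adj i j then (ω (i, j) + ω (j, i)) * ⟪q i - q j, p' i⟫_ℝ else 0 := by
        exact Finset.sum_congr rfl fun i _ => lhs i
    _ = (∑ i, ∑ j, if G.Adj i j then ω (i, j) * ⟪q i - q j, p' i⟫_ℝ else 0) +
          ∑ i, ∑ j, if G.Adj i j then ω (j, i) * ⟪q i - q j, p' i⟫_ℝ else 0 := by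
        rw [← Finset.sum_add_distrib]
        refine Finset.sum_congr rfl fun i _ => ?_
        rw [← Finset.sum_add_distrib]
        refine Finset.sum_congr rfl fun j _ => ?_
        by_cases h : G.Adj i j
        · rw [if_pos h, if_pos h, if_pos h, add_mul]
        · simp [h]
    _ = ∑ ij : Fin n × Fin n, (starRingEnd ℝ) (ω ij) * rig G q p' ij := by
        have key : ∀ i j : Fin n, (starRingEnd ℝ) (ω (i, j)) * rig G q p' (i, j) =
            (if G.Adj i j then ω (i, j) * ⟪q i - q j, p' i⟫_ℝ else 0)
            + (if G.Adj i j then -(ω (i, j) * ⟪q i - q j, p' j⟫_ℝ) else 0) := by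
          intro i j
          rw [rig_apply]
          by_cases h : G.Adj i j
          · simp only [if_pos h, RingHom.id_apply, starRingEnd_apply, star_trivial]
            rw [inner_sub_right]; ring
          · simp [h]
        rw [Fintype.sum_prod_type]
        have : (∑ i, ∑ j, (starRingEnd ℝ) (ω (i, j)) * rig G q p' (i, j)) =
            (∑ i, ∑ j, if G.Adj i j then ω (i, j) * ⟪q i - q j, p' i⟫_ℝ else 0)
            + ∑ i, ∑ j, if G.Adj i j then -(ω (i, j) * ⟪q i - q j, p' j⟫_ℝ) else 0 := by
          rw [← Finset.sum_add_distrib]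
          refine Finset.sum_congr rfl fun i _ => ?_
          rw [← Finset.sum_add_distrib]
          exact Finset.sum_congr rfl fun j _ => key i j
        rw [this]
        congr 1
        rw [Finset.sum_comm]
        refine Finset.sum_congr rfl fun a _ => Finset.sum_congr rfl fun b _ => ?_
        by_cases h : G.Adj a b
        · rw [if_pos h.symm, if_pos h, ← neg_sub (q a) (q b), inner_neg_left]
          ring
        · rw [if_neg (fun hc => h hc.symm), if_neg h]
    _ = ∑ i, ⟪ω i, rig G q p' i⟫_ℝ :=
        Finset.sum_congr rfl fun ij _ => (RCLike.inner_apply' _ _).symm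

/-! ### Coordinates and norms -/

lemma abs_coord_le_norm (x : Y n) (ij : Fin n × Fin n) : |x ij| ≤ ‖x‖ := by
  rw [EuclideanSpace.norm_eq]
  have h1 : |x ij| = Real.sqrt (‖x ij‖ ^ 2) := by
    rw [Real.sqrt_sq_eq_abs]; simp
  rw [h1]
  apply Real.sqrt_le_sqrt
  exact Finset.single_le_sum (f := fun k => ‖x k‖ ^ 2) (fun k _ => sq_nonneg _)
    (Finset.mem_univ ij)

/-! ### Flexes and the kernel of the rigidity map -/

lemma rig_eq_zero_iff (G : SimpleGraph (Fin n)) (q : Config n d) (p' : V n d) :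
    rig G q p' = 0 ↔ IsFlex G q p' := by
  classical
  constructor
  · intro h i j hij
    have h2 := congrFun (congrArg WithLp.ofLp h) (i, j)
    rw [rig_apply] at h2
    rw [if_pos hij] at h2
    exact h2
  · intro h
    ext ij : 1
    rw [rig_apply]
    by_cases hij : G.Adj ij.1 ij.2
    · rw [if_pos hij]
      exact h _ _ hij
    · rw [if_neg hij]; rfl

lemma rig_trivial_eq_zero (G : SimpleGraph (Fin n)) (q : Config n d)
    (S : EuclideanSpace ℝ (Fin d) →ₗ[ℝ] EuclideanSpace ℝ (Fin d))
    (hS : ∀ x y, ⟪S x, y⟫_ℝ = -⟪x, S y⟫_ℝ) (t : EuclideanSpace ℝ (Fin d)) :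
    rig G q (WithLp.toLp 2 (fun i => S (q i) + t) : V n d) = 0 := by
  classical
  ext ij : 1
  rw [rig_apply]
  by_cases hij : G.Adj ij.1 ij.2
  · rw [if_pos hij]
    show ⟪q ij.1 - q ij.2, (S (q ij.1) + t) - (S (q ij.2) + t)⟫_ℝ = _
    rw [add_sub_add_right_eq_sub, ← map_sub]
    have h1 : ⟪S (q ij.1 - q ij.2), q ij.1 - q ij.2⟫_ℝ
        = -⟪q ij.1 - q ij.2, S (q ij.1 - q ij.2)⟫_ℝ := hS _ _
    have h2 : ⟪q ij.1 - q ij.2, S (q ij.1 - q ij.2)⟫_ℝ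
        = ⟪S (q ij.1 - q ij.2), q ij.1 - q ij.2⟫_ℝ := real_inner_comm _ _
    have : ⟪q ij.1 - q ij.2, S (q ij.1 - q ij.2)⟫_ℝ = 0 := by linarith [h2.trans h1]
    rw [this]; rfl
  · rw [if_neg hij]; rfl

/-! ### Stresses -/

open Classical in
/-- Distribute a stress on `Sym2` to ordered pairs, halving. -/
noncomputable def hatStress (G : SimpleGraph (Fin n)) (ω₀ : Sym2 (Fin n) → ℝ) : Y n :=
  WithLp.toLp 2 (fun ij : Fin n × Fin n => if G.Adj ij.1 ij.2 then ω₀ s(ij.1, ij.2) / 2 else 0)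

lemma str_hatStress (G : SimpleGraph (Fin n)) (p : Config n d) (ω₀ : Sym2 (Fin n) → ℝ)
    (hω₀ : IsEquilibriumStressVector G p ω₀) :
    str G p (hatStress G ω₀) = 0 := by
  classical
  ext i : 1
  rw [str_apply]
  have : ∀ j, (if G.Adj i j then
      ((hatStress G ω₀) (i, j) + (hatStress G ω₀) (j, i)) • (p i - p j) else 0)
      = (if G.Adj i j then ω₀ s(i, j) • (p i - p j) else 0) := by
    intro j
    by_cases h : G.Adj i j
    · rw [if_pos h, if_pos h]
      have e1 : (hatStress G ω₀) (i, j) = ω₀ s(i, j) / 2 := by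
        simp only [hatStress]; rw [if_pos h]
      have e2 : (hatStress G ω₀) (j, i) = ω₀ s(i, j) / 2 := by
        simp only [hatStress]; rw [if_pos h.symm, Sym2.eq_swap]
      rw [e1, e2, add_halves]
    · rw [if_neg h, if_neg h]
  rw [Finset.sum_congr rfl fun j _ => this j]
  show _ = (0 : V n d) i
  rw [hω₀ i]; rfl

lemma equilibrium_of_str_eq_zero (G : SimpleGraph (Fin n)) (q : Config n d) (oh : Y n)
    (h : str G q oh = 0) :
    IsEquilibriumStressVector G q
      (Sym2.lift ⟨fun i j => oh (i, j) + oh (j, i), fun i j => by simp [add_comm]⟩) := by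
  classical
  intro i
  have : ∀ j, (if G.Adj i j then
      (Sym2.lift ⟨fun i j => oh (i, j) + oh (j, i), fun i j => by simp [add_comm]⟩ s(i, j))
        • (q i - q j) else 0)
      = (if G.Adj i j then (oh (i, j) + oh (j, i)) • (q i - q j) else 0) := by
    intro j
    by_cases h' : G.Adj i j
    · rw [if_pos h', if_pos h', Sym2.lift_mk]
    · rw [if_neg h', if_neg h']
  rw [Finset.sum_congr rfl fun j _ => this j]
  have := congrFun (congrArg WithLp.ofLp h) i
  rw [str_apply] at this
  exact this.trans rfl

end NES
open Finset Module NES in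
/-- Nearby infinitesimally rigid frameworks have nearby equilibrium stress vectors. -/
theorem nearby_equilibrium_stress (n d : ℕ) (G : SimpleGraph (Fin n))
    (p₀ : Config n d) (hIR : InfinitesimallyRigid G p₀)
    (ω₀ : Sym2 (Fin n) → ℝ) (hω₀ : IsEquilibriumStressVector G p₀ ω₀) :
    ∀ ε > (0 : ℝ), ∃ δ > (0 : ℝ), ∀ q : Config n d,
      (∀ i, ‖q i - p₀ i‖ < δ) → InfinitesimallyRigid G q →
      ∃ ω : Sym2 (Fin n) → ℝ, IsEquilibriumStressVector G q ω ∧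
        ∀ e ∈ G.edgeSet, |ω e - ω₀ e| < ε := by
  classical
  intro ε hε
  set s := finrank ℝ ↥(LinearMap.ker (rig G p₀)) with hs
  set r := finrank ℝ ↥(LinearMap.range (rig G p₀)) with hr
  -- basis of the kernel (space of flexes) at p₀
  let b1 : Basis (Fin s) ℝ ↥(LinearMap.ker (rig G p₀)) := finBasis ℝ _
  let u : Fin s → V n d := fun i => (b1 i : V n d)
  have hu_li : LinearIndependent ℝ u :=
    b1.linearIndependent.map' (Submodule.subtype _) (Submodule.ker_subtype _)
  have hu_mem : ∀ i, rig G p₀ (u i) = 0 := fun i => LinearMap.mem_ker.1 (b1 i).2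
  have htriv : ∀ i : Fin s, IsTrivialFlex p₀ (u i) := fun i =>
    hIR _ ((rig_eq_zero_iff G p₀ (u i)).1 (hu_mem i))
  choose S hSkew t ht using htriv
  let triv : Config n d → Fin s → V n d := fun q i => (WithLp.toLp 2 (fun i' => S i (q i') + t i) : V n d)
  have htriv_p₀ : ∀ i, triv p₀ i = u i := by
    intro i; ext i' : 1; exact (ht i i').symm
  have htriv_ker : ∀ (q : Config n d) (i), rig G q (triv q i) = 0 := fun q i =>
    rig_trivial_eq_zero G q (S i) (hSkew i) (t i)
  -- basis of the range at p₀ and preimages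
  let b2 : Basis (Fin r) ℝ ↥(LinearMap.range (rig G p₀)) := finBasis ℝ _
  have hw' : ∀ i : Fin r, ∃ w : V n d, rig G p₀ w = (b2 i : Y n) := fun i =>
    LinearMap.mem_range.1 (b2 i).2
  choose w hw using hw'
  have hv_li : LinearIndependent ℝ (fun i => rig G p₀ (w i)) := by
    have he : (fun i => rig G p₀ (w i)) = fun i => (b2 i : Y n) := funext fun i => hw i
    rw [he]
    exact b2.linearIndependent.map' (Submodule.subtype _) (Submodule.ker_subtype _)
  -- the reference stress, in ordered-pair form
  set oh₀ : Y n := hatStress G ω₀ with hoh₀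
  have hstr₀ : str G p₀ oh₀ = 0 := str_hatStress G p₀ ω₀ hω₀
  -- continuity of the relevant families
  have hcont_triv : ∀ i, Continuous fun q : Config n d => triv q i := by
    intro i
    have : Continuous fun q : Config n d =>
        ((WithLp.equiv 2 (∀ _ : Fin n, EuclideanSpace ℝ (Fin d))).symm
          (fun i' => S i (q i') + t i) : V n d) := by
      refine (PiLp.continuous_toLp _ _).comp (continuous_pi fun i' => ?_)
      exact (((S i).continuous_of_finiteDimensional).comp (continuous_apply i')).add
        continuous_const
    exact this
  have hcont_rig : ∀ x : V n d, Continuous fun q : Config n d => rig G q x := by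
    intro x
    have : Continuous fun q : Config n d =>
        ((WithLp.equiv 2 (∀ _ : Fin n × Fin n, ℝ)).symm
          (fun ij : Fin n × Fin n =>
            if G.Adj ij.1 ij.2 then ⟪q ij.1 - q ij.2, x ij.1 - x ij.2⟫_ℝ else 0) : Y n) := by
      refine (PiLp.continuous_toLp _ _).comp (continuous_pi fun ij => ?_)
      by_cases h : G.Adj ij.1 ij.2
      · simp only [if_pos h]
        exact ((continuous_apply ij.1).sub (continuous_apply ij.2)).inner continuous_const
      · simp only [if_neg h]
        exact continuous_const
    exact this
  -- Gram matrices and determinants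
  set N : Config n d → Matrix (Fin s) (Fin s) ℝ :=
    (fun q => gramMat fun i => triv q i) with hN
  set M : Config n d → Matrix (Fin r) (Fin r) ℝ :=
    (fun q => gramMat fun i => rig G q (w i)) with hM
  have hNcont : Continuous N :=
    continuous_matrix fun i j => (hcont_triv i).inner (hcont_triv j)
  have hMcont : Continuous M :=
    continuous_matrix fun i j => (hcont_rig (w i)).inner (hcont_rig (w j))
  have hg₁p₀ : (N p₀).det ≠ 0 := by
    have he : (fun i => triv p₀ i) = u := funext htriv_p₀
    rw [hN]
    show (gramMat fun i => triv p₀ i).det ≠ 0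
    rw [he]
    exact det_gramMat_ne_zero hu_li
  have hg₂p₀ : (M p₀).det ≠ 0 := det_gramMat_ne_zero hv_li
  -- the correction coefficients and correction vector
  set rhs : Config n d → Fin r → ℝ := (fun q i => ⟪rig G q (w i), oh₀⟫_ℝ) with hrhs
  set c : Config n d → Fin r → ℝ :=
    (fun q => ((M q).det)⁻¹ • (M q).cramer (rhs q)) with hc
  set η : Config n d → Y n := (fun q => ∑ i, c q i • rig G q (w i)) with hη
  have hrhs_cont : Continuous fun q => rhs q :=
    continuous_pi fun i => (hcont_rig (w i)).inner continuous_const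
  have hcAt : ContinuousAt c p₀ := by
    have h1 : ContinuousAt (fun q => ((M q).det)⁻¹) p₀ :=
      (hMcont.matrix_det.continuousAt).inv₀ hg₂p₀
    have h2 : Continuous fun q => (M q).cramer (rhs q) :=
      hMcont.matrix_cramer hrhs_cont
    exact h1.smul h2.continuousAt
  have hηAt : ContinuousAt η p₀ := by
    rw [hη]
    exact tendsto_finset_sum _ fun i _ =>
      (((continuous_apply i).continuousAt).comp hcAt).smul (hcont_rig (w i)).continuousAt
  -- at p₀ the correction vanishes
  have hrhs₀ : rhs p₀ = 0 := by
    funext i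
    rw [hrhs]
    show ⟪rig G p₀ (w i), oh₀⟫_ℝ = 0
    rw [real_inner_comm, ← pairing, hstr₀, inner_zero_left]
  have hc₀ : c p₀ = 0 := by
    rw [hc]
    show ((M p₀).det)⁻¹ • (M p₀).cramer (rhs p₀) = 0
    rw [hrhs₀, map_zero, smul_zero]
  have hη₀ : η p₀ = 0 := by
    rw [hη]
    show (∑ i, c p₀ i • rig G p₀ (w i)) = 0
    rw [hc₀]
    exact Finset.sum_eq_zero fun i _ => by rw [Pi.zero_apply, zero_smul]
  -- find a good ball around p₀
  have hU : {q : Config n d | (N q).det ≠ 0} ∩ {q | (M q).det ≠ 0} ∩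
      η ⁻¹' (Metric.ball 0 (ε / 2)) ∈ nhds p₀ := by
    refine Filter.inter_mem (Filter.inter_mem ?_ ?_) ?_
    · exact (isOpen_compl_singleton.preimage hNcont.matrix_det).mem_nhds hg₁p₀
    · exact (isOpen_compl_singleton.preimage hMcont.matrix_det).mem_nhds hg₂p₀
    · apply hηAt
      rw [hη₀]
      exact Metric.ball_mem_nhds _ (by linarith)
  obtain ⟨δ, hδpos, hball⟩ := Metric.mem_nhds_iff.1 hU
  refine ⟨δ, hδpos, fun q hqδ _ => ?_⟩
  have hqball : q ∈ Metric.ball p₀ δ := by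
    rw [Metric.mem_ball, dist_pi_lt_iff hδpos]
    intro i; rw [dist_eq_norm]; exact hqδ i
  obtain ⟨⟨hq1, hq2⟩, hq3'⟩ := hball hqball
  have hq3 : ‖η q‖ < ε / 2 := by
    have := hq3'
    rwa [Set.mem_preimage, Metric.mem_ball, dist_zero_right] at this
  -- linear algebra at q : the span of the rig-images of the wᵢ is the whole range
  have li1 : LinearIndependent ℝ fun i => triv q i := li_of_det_gramMat_ne_zero hq1
  have li2 : LinearIndependent ℝ fun i => rig G q (w i) := li_of_det_gramMat_ne_zero hq2
  have hspan_le : Submodule.span ℝ (Set.range fun i => rig G q (w i)) ≤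
      LinearMap.range (rig G q) := by
    rw [Submodule.span_le]
    rintro y ⟨i, rfl⟩
    exact LinearMap.mem_range_self _ _
  have hker_ge : s ≤ finrank ℝ ↥(LinearMap.ker (rig G q)) := by
    have hle : Submodule.span ℝ (Set.range fun i => triv q i) ≤ LinearMap.ker (rig G q) := by
      rw [Submodule.span_le]
      rintro y ⟨i, rfl⟩
      exact LinearMap.mem_ker.2 (htriv_ker q i)
    calc s = finrank ℝ ↥(Submodule.span ℝ (Set.range fun i => triv q i)) := by
          rw [finrank_span_eq_card li1, Fintype.card_fin]
      _ ≤ _ := Submodule.finrank_mono hle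
  have hrank_le : finrank ℝ ↥(LinearMap.range (rig G q)) ≤ r := by
    have e1 := LinearMap.finrank_range_add_finrank_ker (rig G q)
    have e2 := LinearMap.finrank_range_add_finrank_ker (rig G p₀)
    rw [← hs, ← hr] at e2
    omega
  have hspan_eq : Submodule.span ℝ (Set.range fun i => rig G q (w i)) =
      LinearMap.range (rig G q) := by
    apply Submodule.eq_of_le_of_finrank_le hspan_le
    rw [finrank_span_eq_card li2, Fintype.card_fin]
    exact hrank_le
  -- the corrected stress
  set oh : Y n := oh₀ - η q with hoh
  have horth : ∀ j, ⟪rig G q (w j), oh⟫_ℝ = 0 := by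
    intro j
    have hmv : (gramMat fun i => rig G q (w i)).mulVec (c q) = rhs q := by
      show (M q).mulVec (c q) = rhs q
      rw [hc]
      show (M q).mulVec (((M q).det)⁻¹ • (M q).cramer (rhs q)) = rhs q
      rw [Matrix.mulVec_smul, Matrix.mulVec_cramer, smul_smul, inv_mul_cancel₀ hq2, one_smul]
    have h1 : ⟪rig G q (w j), η q⟫_ℝ = (gramMat fun i => rig G q (w i)).mulVec (c q) j := by
      rw [gramMat_mulVec]
    rw [hoh, inner_sub_right, h1, hmv]
    show rhs q j - rhs q j = 0
    exact sub_self _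
  have horth' : ∀ y, ⟪oh, rig G q y⟫_ℝ = 0 := by
    intro y
    have hy : rig G q y ∈ Submodule.span ℝ (Set.range fun i => rig G q (w i)) := by
      rw [hspan_eq]
      exact LinearMap.mem_range_self _ _
    obtain ⟨b, hb⟩ := (Submodule.mem_span_range_iff_exists_fun ℝ).1 hy
    rw [← hb, inner_sum]
    refine Finset.sum_eq_zero fun i _ => ?_
    rw [real_inner_smul_right, real_inner_comm, horth i, mul_zero]
  have hstr_oh : str G q oh = 0 := by
    have h0 : ⟪str G q oh, str G q oh⟫_ℝ = 0 := by
      rw [pairing]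
      exact horth' _
    exact inner_self_eq_zero.1 h0
  refine ⟨Sym2.lift ⟨fun i j => oh (i, j) + oh (j, i), fun i j => add_comm _ _⟩,
    equilibrium_of_str_eq_zero G q oh hstr_oh, ?_⟩
  intro e he
  induction e using Sym2.ind with
  | _ i j =>
    rw [SimpleGraph.mem_edgeSet] at he
    rw [Sym2.lift_mk]
    have h₀ : ω₀ s(i, j) = oh₀ (i, j) + oh₀ (j, i) := by
      rw [hoh₀]
      show ω₀ s(i, j) = (if G.Adj i j then ω₀ s(i, j) / 2 else 0)
        + (if G.Adj j i then ω₀ s(j, i) / 2 else 0)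
      rw [if_pos he, if_pos he.symm, ← Sym2.eq_swap (a := i) (b := j)]
      ring
    have hcoord : ∀ ij : Fin n × Fin n, oh ij = oh₀ ij - η q ij := fun ij => rfl
    have hd : ((fun i j => oh (i, j) + oh (j, i)) i j) - ω₀ s(i, j)
        = -(η q (i, j)) + -(η q (j, i)) := by
      show (oh (i, j) + oh (j, i)) - ω₀ s(i, j) = _
      rw [h₀, hcoord, hcoord]
      ring
    rw [hd]
    calc |(-(η q (i, j))) + -(η q (j, i))| ≤ |(-(η q (i, j)))| + |(-(η q (j, i)))| :=
          abs_add_le _ _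
      _ = |η q (i, j)| + |η q (j, i)| := by rw [abs_neg, abs_neg]
      _ ≤ ‖η q‖ + ‖η q‖ := add_le_add (abs_coord_le_norm _ _) (abs_coord_le_norm _ _)
      _ < ε := by linarith
end

section
/- Let G be a graph on Fin n and fix d ≥ 1. The set of configurations p : Fin n → ℝ^d whose edge directions lie on a conic at infinity — i.e., for which there exists a nonzero symmetric d×d real matrix Q with (p i − p j)ᵀ Q (p i − p j) = 0 for all edges {i,j} of G — is closed in the Euclidean topology on configuration space. Consequently, if the edge directions of (G,p) do not lie on a conic at infinity, the same holds for all configurations sufficiently close to p. -/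
open scoped InnerProductSpace

/-- The edge directions of `(G,p)` lie on a conic at infinity. -/
def ConicAtInfinity {n d : ℕ} (G : SimpleGraph (Fin n)) (p : Config n d) : Prop :=
  ∃ Q : Matrix (Fin d) (Fin d) ℝ, Q ≠ 0 ∧ Q.IsSymm ∧
    ∀ i j, G.Adj i j → ∑ a, ∑ b, Q a b * (p i - p j) a * (p i - p j) b = 0

/-- The set of configurations whose edge directions lie on a conic at infinity is
closed; hence not lying on a conic at infinity persists in a neighborhood. -/
theorem conicAtInfinity_closed (n d : ℕ) (hd : d ≥ 1) (G : SimpleGraph (Fin n)) :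
    IsClosed {p : Config n d | ConicAtInfinity G p} ∧
    ∀ p : Config n d, ¬ ConicAtInfinity G p →
      ∃ ε > (0 : ℝ), ∀ q : Config n d, (∀ i, ‖q i - p i‖ < ε) →
        ¬ ConicAtInfinity G q := by
  classical
  have hclosed : IsClosed {p : Config n d | ConicAtInfinity G p} := by
    let E := EuclideanSpace ℝ (Fin d × Fin d)
    let F : E → Matrix (Fin d) (Fin d) ℝ := fun Q => Matrix.of (fun a b => Q (a, b))
    let K : Set E := Metric.sphere 0 1
    haveI : CompactSpace K := isCompact_iff_compactSpace.mp (isCompact_sphere 0 1)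
    let C : Set (K × Config n d) :=
      {x | (F (x.1 : E)).IsSymm ∧ ∀ i j, G.Adj i j →
        ∑ a, ∑ b, F (x.1 : E) a b * (x.2 i - x.2 j) a * (x.2 i - x.2 j) b = 0}
    have hent : ∀ a b : Fin d, Continuous (fun x : K × Config n d => F (x.1 : E) a b) := by
      intro a b
      exact (EuclideanSpace.proj (a, b)).continuous.comp
        (continuous_subtype_val.comp continuous_fst)
    have hvec : ∀ (i j : Fin n) (a : Fin d),
        Continuous (fun x : K × Config n d => (x.2 i - x.2 j) a) := by
      intro i j a
      have h2i : Continuous fun x : K × Config n d => x.2 i :=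
        (continuous_apply i).comp continuous_snd
      have h2j : Continuous fun x : K × Config n d => x.2 j :=
        (continuous_apply j).comp continuous_snd
      exact (EuclideanSpace.proj a).continuous.comp (h2i.sub h2j)
    have hFc : Continuous fun x : K × Config n d => F (x.1 : E) :=
      continuous_pi fun a => continuous_pi fun b => hent a b
    have hFt : Continuous fun x : K × Config n d => (F (x.1 : E)).transpose :=
      continuous_pi fun a => continuous_pi fun b => hent b a
    have hC : IsClosed C := by
      have h1 : IsClosed {x : K × Config n d | (F (x.1 : E)).IsSymm} := by
        have : {x : K × Config n d | (F (x.1 : E)).IsSymm} =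
            {x : K × Config n d | (F (x.1 : E)).transpose = F (x.1 : E)} := rfl
        rw [this]
        exact isClosed_eq hFt hFc
      have h2 : IsClosed {x : K × Config n d | ∀ i j, G.Adj i j →
          ∑ a, ∑ b, F (x.1 : E) a b * (x.2 i - x.2 j) a * (x.2 i - x.2 j) b = 0} := by
        have : {x : K × Config n d | ∀ i j, G.Adj i j →
            ∑ a, ∑ b, F (x.1 : E) a b * (x.2 i - x.2 j) a * (x.2 i - x.2 j) b = 0} =
            ⋂ i, ⋂ j, ⋂ (_ : G.Adj i j),
              {x : K × Config n d |
                ∑ a, ∑ b, F (x.1 : E) a b * (x.2 i - x.2 j) a * (x.2 i - x.2 j) b = 0} := by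
          ext x; simp [Set.mem_iInter]
        rw [this]
        refine isClosed_iInter fun i => isClosed_iInter fun j => isClosed_iInter fun _ => ?_
        refine isClosed_eq ?_ continuous_const
        refine continuous_finset_sum _ fun a _ => continuous_finset_sum _ fun b _ => ?_
        exact ((hent a b).mul (hvec i j a)).mul (hvec i j b)
      exact h1.inter h2
    have himage : {p : Config n d | ConicAtInfinity G p} = Prod.snd '' C := by
      ext p
      constructor
      · rintro ⟨Q, hQ0, hsym, heq⟩
        let Q0 : E := WithLp.toLp 2 (fun ab : Fin d × Fin d => Q ab.1 ab.2)
        have hQ0' : Q0 ≠ 0 := by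
          intro h
          apply hQ0
          ext a b
          exact congrArg (fun v : E => v (a, b)) h
        have hc : ‖Q0‖ ≠ 0 := norm_ne_zero_iff.mpr hQ0'
        let Q' : E := ‖Q0‖⁻¹ • Q0
        have hQ'K : Q' ∈ K := by
          simp only [K, Metric.mem_sphere, dist_zero_right, Q', norm_smul, norm_inv,
            norm_norm]
          field_simp
          rw [Real.norm_eq_abs, abs_of_nonneg (norm_nonneg _)]
        refine ⟨⟨⟨Q', hQ'K⟩, p⟩, ⟨?_, ?_⟩, rfl⟩
        · have hF : F Q' = ‖Q0‖⁻¹ • Q := by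
            ext a b
            simp [F, Q', Q0, Matrix.smul_apply]
            rfl
          rw [hF]
          exact hsym.smul _
        · intro i j hij
          have hF : ∀ a b, F Q' a b = ‖Q0‖⁻¹ * Q a b := by
            intro a b; rfl
          simp only [mul_assoc] at heq
          simp only [hF, mul_assoc, ← Finset.mul_sum]
          rw [heq i j hij, mul_zero]
      · rintro ⟨⟨⟨Q', hQ'K⟩, q⟩, ⟨hsym, heq⟩, rfl⟩
        refine ⟨F Q', ?_, hsym, heq⟩
        intro h
        have hQ'0 : Q' = 0 := by
          ext ab
          have := congrFun (congrFun h ab.1) ab.2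
          simpa [F] using this
        simp only [K, Metric.mem_sphere, dist_zero_right, hQ'0, norm_zero] at hQ'K
        norm_num at hQ'K
    rw [himage]
    exact isClosedMap_snd_of_compactSpace C hC
  refine ⟨hclosed, ?_⟩
  intro p hp
  have hopen : IsOpen {q : Config n d | ¬ ConicAtInfinity G q} := by
    have : {q : Config n d | ¬ ConicAtInfinity G q} =
        {q : Config n d | ConicAtInfinity G q}ᶜ := rfl
    rw [this]
    exact hclosed.isOpen_compl
  obtain ⟨ε, hε, hball⟩ := Metric.isOpen_iff.mp hopen p hp
  refine ⟨ε, hε, fun q hq => hball ?_⟩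
  rw [Metric.mem_ball, dist_pi_lt_iff hε]
  intro i
  rw [dist_eq_norm]
  exact hq i
end

section
/- Let Ω₀ be a symmetric n×n real matrix that is positive semidefinite of rank r. Then there exists ε > 0 such that every symmetric n×n real matrix Ω with ‖Ω − Ω₀‖ < ε and rank Ω ≤ r is positive semidefinite of rank exactly r. -/
attribute [local instance] Matrix.normedAddCommGroup

open Module Matrix

/-- Algebraic key lemma: a symmetric matrix of rank at most `r` that is positive
definite on an `r`-dimensional subspace is PSD of rank exactly `r`. -/
lemma psd_rank_aux (n r : ℕ) (Ω : Matrix (Fin n) (Fin n) ℝ) (hs : Ω.IsSymm)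
    (V : Submodule ℝ (Fin n → ℝ)) (hVr : finrank ℝ V = r)
    (hpos : ∀ x ∈ V, x ≠ 0 → 0 < dotProduct x (Ω.mulVec x))
    (hrank : Ω.rank ≤ r) :
    Ω.PosSemidef ∧ Ω.rank = r := by
  classical
  set K := LinearMap.ker Ω.mulVecLin with hK
  have hdisj : Disjoint V K := by
    rw [Submodule.disjoint_def]
    intro x hxV hxK
    by_contra hx0
    have h1 : Ω.mulVec x = 0 := hxK
    have h2 := hpos x hxV hx0
    rw [h1, dotProduct_zero] at h2
    exact lt_irrefl 0 h2
  have hfintop : finrank ℝ (Fin n → ℝ) = n := by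
    simp [Module.finrank_pi]
  have hrn : Ω.rank + finrank ℝ K = n := by
    have := LinearMap.finrank_range_add_finrank_ker Ω.mulVecLin
    rw [hfintop] at this
    exact this
  have hle : finrank ℝ V + finrank ℝ K ≤ n := by
    have := Submodule.finrank_add_finrank_le_of_disjoint hdisj
    rw [hfintop] at this
    exact this
  have hrankeq : Ω.rank = r := by omega
  have hsup : V ⊔ K = ⊤ := by
    apply Submodule.eq_top_of_finrank_eq
    have h1 := Submodule.finrank_sup_add_finrank_inf_eq V K
    rw [hdisj.eq_bot, finrank_bot, add_zero, hVr] at h1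
    have h2 : finrank ℝ ↥(V ⊔ K) ≤ finrank ℝ (Fin n → ℝ) :=
      Submodule.finrank_le _
    rw [hfintop] at h2 ⊢
    omega
  have hherm : Ω.IsHermitian := by
    ext i j
    simp only [Matrix.conjTranspose_apply, star_trivial]
    exact congrFun (congrFun hs i) j
  have hkersym : ∀ k ∈ K, ∀ v : Fin n → ℝ,
      dotProduct k (Ω.mulVec v) = 0 := by
    intro k hk v
    have h1 : Ω.mulVec k = 0 := hk
    rw [Matrix.dotProduct_mulVec, ← Matrix.mulVec_transpose, hs.eq, h1,
      zero_dotProduct]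
  have hq : ∀ x : Fin n → ℝ, 0 ≤ dotProduct x (Ω.mulVec x) := by
    intro x
    have hx : x ∈ V ⊔ K := hsup ▸ Submodule.mem_top
    obtain ⟨v, hv, k, hk, rfl⟩ := Submodule.mem_sup.mp hx
    have hΩk : Ω.mulVec k = 0 := hk
    have hexp : dotProduct (v + k) (Ω.mulVec (v + k)) =
        dotProduct v (Ω.mulVec v) := by
      rw [Matrix.mulVec_add, hΩk, add_zero, add_dotProduct,
        hkersym k hk v, add_zero]
    rw [hexp]
    rcases eq_or_ne v 0 with rfl | hv0
    · simp
    · exact le_of_lt (hpos v hv hv0)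
  refine ⟨Matrix.PosSemidef.of_dotProduct_mulVec_nonneg hherm (fun x => ?_), hrankeq⟩
  simpa using hq x

/-- Near a PSD matrix of rank `r`, every symmetric matrix of rank at most `r` is PSD
of rank exactly `r`. -/
theorem psd_rank_stable (n r : ℕ) (Ω₀ : Matrix (Fin n) (Fin n) ℝ)
    (h₀ : Ω₀.PosSemidef) (hr : Ω₀.rank = r) :
    ∃ ε > (0 : ℝ), ∀ Ω : Matrix (Fin n) (Fin n) ℝ, Ω.IsSymm →
      ‖Ω - Ω₀‖ < ε → Ω.rank ≤ r → Ω.PosSemidef ∧ Ω.rank = r := by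
  classical
  -- trivial case r = 0
  rcases Nat.eq_zero_or_pos r with rfl | hrpos
  · refine ⟨1, one_pos, fun Ω hΩs hΩn hΩr => ?_⟩
    have h1 : Ω.rank = 0 := Nat.le_zero.mp hΩr
    have h2 : LinearMap.range Ω.mulVecLin = ⊥ := Submodule.finrank_eq_zero.mp h1
    have hΩ0 : Ω = 0 := by
      ext i j
      have h3 : Ω.mulVecLin (Pi.single j 1) = 0 := by
        have := LinearMap.range_eq_bot.mp h2
        rw [this]; rfl
      have h4 := congrFun h3 i
      simpa [Matrix.mulVecLin_apply, Matrix.mulVec_single] using h4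
    subst hΩ0
    exact ⟨Matrix.PosSemidef.zero, Matrix.rank_zero⟩
  -- main case
  set V := LinearMap.range Ω₀.mulVecLin with hV
  have hVr : finrank ℝ V = r := hr
  have hsym₀ : Ω₀ᵀ = Ω₀ := by
    ext i j
    have := congrFun (congrFun h₀.1 i) j
    simpa using this
  -- Ω₀ is positive definite on V
  have hpos₀ : ∀ x ∈ V, x ≠ 0 → 0 < dotProduct x (Ω₀.mulVec x) := by
    intro x hx hx0
    have hnonneg : 0 ≤ dotProduct x (Ω₀.mulVec x) := by
      simpa using h₀.dotProduct_mulVec_nonneg x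
    rcases hnonneg.lt_or_eq with h | h
    · exact h
    · exfalso
      have hker : Ω₀.mulVec x = 0 := by
        have := (h₀.dotProduct_mulVec_zero_iff x).mp (by simpa using h.symm)
        exact this
      obtain ⟨y, hy⟩ := hx
      have hy' : Ω₀.mulVec y = x := hy
      have hxx : dotProduct x x = 0 := by
        calc dotProduct x x = dotProduct x (Ω₀.mulVec y) := by rw [hy']
          _ = 0 := by
            rw [Matrix.dotProduct_mulVec, ← Matrix.mulVec_transpose, hsym₀, hker,
              zero_dotProduct]
      exact hx0 (dotProduct_self_eq_zero.mp hxx)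
  -- the unit sphere of V is compact and nonempty
  have hVne : ∃ v : Fin n → ℝ, v ∈ V ∧ v ≠ 0 := by
    by_contra h
    push_neg at h
    have : V = ⊥ := by
      rw [Submodule.eq_bot_iff]
      intro x hx
      by_contra hx0
      exact hx0 (h x hx)
    rw [this, finrank_bot] at hVr
    omega
  set S : Set (Fin n → ℝ) := (V : Set (Fin n → ℝ)) ∩ Metric.sphere 0 1 with hS
  have hScomp : IsCompact S :=
    (isCompact_sphere (0 : Fin n → ℝ) 1).inter_left V.closed_of_finiteDimensional
  have hSne : S.Nonempty := by
    obtain ⟨v, hvV, hv0⟩ := hVne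
    refine ⟨‖v‖⁻¹ • v, V.smul_mem _ hvV, ?_⟩
    have hv : ‖v‖ ≠ 0 := norm_ne_zero_iff.mpr hv0
    simp [norm_smul, abs_of_nonneg (inv_nonneg.mpr (norm_nonneg v)),
      inv_mul_cancel₀ hv]
  have hcont : Continuous fun x : Fin n → ℝ => dotProduct x (Ω₀.mulVec x) := by
    have heq : (fun x : Fin n → ℝ => dotProduct x (Ω₀.mulVec x)) =
        fun x => ∑ i, ∑ j, x i * (Ω₀ i j * x j) := by
      funext x; simp [dotProduct, Matrix.mulVec, Finset.mul_sum]
    rw [heq]; fun_prop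
  obtain ⟨x₀, hx₀S, hmin⟩ := hScomp.exists_isMinOn hSne hcont.continuousOn
  set c : ℝ := dotProduct x₀ (Ω₀.mulVec x₀) with hc
  have hx₀V : x₀ ∈ V := hx₀S.1
  have hx₀n : ‖x₀‖ = 1 := by simpa using hx₀S.2
  have hx₀0 : x₀ ≠ 0 := by
    intro h; rw [h, norm_zero] at hx₀n; exact one_ne_zero hx₀n.symm
  have hcpos : 0 < c := hpos₀ x₀ hx₀V hx₀0
  -- quadratic form bound by the sup norm
  have key : ∀ (A : Matrix (Fin n) (Fin n) ℝ) (x : Fin n → ℝ), ‖x‖ ≤ 1 →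
      |dotProduct x (A.mulVec x)| ≤ (n : ℝ)^2 * ‖A‖ := by
    intro A x hx
    have hxi : ∀ i, |x i| ≤ 1 := fun i => by
      have := norm_le_pi_norm x i
      simpa using this.trans hx
    have hAij : ∀ i j, |A i j| ≤ ‖A‖ := fun i j => by
      simpa using A.norm_entry_le_entrywise_sup_norm (i := i) (j := j)
    calc |dotProduct x (A.mulVec x)|
        = |∑ i, ∑ j, x i * (A i j * x j)| := by
          simp [dotProduct, Matrix.mulVec, Finset.mul_sum]
      _ ≤ ∑ i, |∑ j, x i * (A i j * x j)| := Finset.abs_sum_le_sum_abs _ _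
      _ ≤ ∑ i : Fin n, ∑ j : Fin n, |x i * (A i j * x j)| :=
          Finset.sum_le_sum fun i _ => Finset.abs_sum_le_sum_abs _ _
      _ ≤ ∑ _i : Fin n, ∑ _j : Fin n, ‖A‖ := by
          refine Finset.sum_le_sum fun i _ => Finset.sum_le_sum fun j _ => ?_
          rw [abs_mul, abs_mul]
          calc |x i| * (|A i j| * |x j|) ≤ 1 * (‖A‖ * 1) := by
                apply mul_le_mul (hxi i) _ (by positivity)
                  (by linarith [abs_nonneg (x i)])
                exact mul_le_mul (hAij i j) (hxi j) (abs_nonneg _)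
                  (le_trans (abs_nonneg _) (hAij i j))
            _ = ‖A‖ := by ring
      _ = (n : ℝ)^2 * ‖A‖ := by
          simp [Finset.sum_const, Finset.card_univ]
          ring
  refine ⟨c / ((n : ℝ)^2 + 1), by positivity, fun Ω hΩs hΩn hΩr => ?_⟩
  refine psd_rank_aux n r Ω hΩs V hVr ?_ hΩr
  -- Ω is positive definite on V
  intro x hx hx0
  have hxn : ‖x‖ ≠ 0 := norm_ne_zero_iff.mpr hx0
  set u : Fin n → ℝ := ‖x‖⁻¹ • x with hu
  have huV : u ∈ V := V.smul_mem _ hx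
  have hun : ‖u‖ = 1 := by
    simp [hu, norm_smul, abs_of_nonneg (inv_nonneg.mpr (norm_nonneg x)),
      inv_mul_cancel₀ hxn]
  have hu0 : u ≠ 0 := by
    intro h; rw [h, norm_zero] at hun; exact one_ne_zero hun.symm
  -- q_Ω(u) > 0
  have hq₀ : c ≤ dotProduct u (Ω₀.mulVec u) := hmin (⟨huV, by simp [hun]⟩ : u ∈ S)
  have hdiff : |dotProduct u ((Ω - Ω₀).mulVec u)| ≤ (n : ℝ)^2 * ‖Ω - Ω₀‖ :=
    key (Ω - Ω₀) u hun.le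
  have hsmall : (n : ℝ)^2 * ‖Ω - Ω₀‖ < c := by
    have h1 : (n : ℝ)^2 * ‖Ω - Ω₀‖ ≤ ((n : ℝ)^2 + 1) * ‖Ω - Ω₀‖ := by
      apply mul_le_mul_of_nonneg_right _ (norm_nonneg _)
      linarith
    have h2 : ((n : ℝ)^2 + 1) * ‖Ω - Ω₀‖ < ((n : ℝ)^2 + 1) * (c / ((n : ℝ)^2 + 1)) :=
      by apply mul_lt_mul_of_pos_left hΩn; positivity
    have h3 : ((n : ℝ)^2 + 1) * (c / ((n : ℝ)^2 + 1)) = c := by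
      field_simp
    linarith
  have hqu : 0 < dotProduct u (Ω.mulVec u) := by
    have hsplit : dotProduct u (Ω.mulVec u) =
        dotProduct u (Ω₀.mulVec u) +
        dotProduct u ((Ω - Ω₀).mulVec u) := by
      rw [Matrix.sub_mulVec, dotProduct_sub]
      ring
    rw [hsplit]
    have := neg_abs_le (dotProduct u ((Ω - Ω₀).mulVec u))
    linarith
  -- scale back to x
  have hxu : dotProduct x (Ω.mulVec x) =
      ‖x‖^2 * dotProduct u (Ω.mulVec u) := by
    have hxeq : x = ‖x‖ • u := by
      rw [hu, smul_smul, mul_inv_cancel₀ hxn, one_smul]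
    calc dotProduct x (Ω.mulVec x)
        = dotProduct (‖x‖ • u) (Ω.mulVec (‖x‖ • u)) := by rw [← hxeq]
      _ = ‖x‖^2 * dotProduct u (Ω.mulVec u) := by
          rw [Matrix.mulVec_smul, smul_dotProduct, dotProduct_smul]
          simp [smul_eq_mul]; ring
  rw [hxu]
  have : (0:ℝ) < ‖x‖^2 := by positivity
  positivity
end

section
/- Let n ≥ d + 2, let G be a graph on Fin n, and let Ω be an equilibrium stress matrix of rank n − d − 1 for two frameworks (G,p) and (G,q) in ℝ^d, where both p and q affinely span ℝ^d. Then there is an invertible affine transformation A of ℝ^d with q i = A (p i) for all i. -/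
open scoped InnerProductSpace

/-- A stress matrix for `G`: symmetric, zero at off-diagonal non-edge entries, and
with the all-ones vector in its kernel. -/
def IsStressMatrix {n : ℕ} (G : SimpleGraph (Fin n)) (Ω : Matrix (Fin n) (Fin n) ℝ) : Prop :=
  Ω.IsSymm ∧ (∀ i j, i ≠ j → ¬ G.Adj i j → Ω i j = 0) ∧ Ω.mulVec (fun _ => 1) = 0

/-- An equilibrium stress matrix for the framework `(G,p)`. -/
def IsEquilibriumStressMatrix {n d : ℕ} (G : SimpleGraph (Fin n)) (p : Config n d)
    (Ω : Matrix (Fin n) (Fin n) ℝ) : Prop :=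
  IsStressMatrix G Ω ∧ ∀ i, ∑ j, Ω i j • p j = 0

private lemma aux_inner_zero {n d : ℕ} (r : Config n d)
    (hr : affineSpan ℝ (Set.range r) = ⊤) (x : EuclideanSpace ℝ (Fin d))
    (hx : ∀ i j : Fin n, ⟪x, r i - r j⟫_ℝ = 0) : x = 0 := by
  have hv : vectorSpan ℝ (Set.range r) = ⊤ :=
    AffineSubspace.vectorSpan_eq_top_of_affineSpan_eq_top ℝ _ _ hr
  have hle : vectorSpan ℝ (Set.range r) ≤ LinearMap.ker (innerₛₗ ℝ x) := by
    rw [vectorSpan_def, Submodule.span_le]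
    rintro v hv'
    rw [Set.mem_vsub] at hv'
    obtain ⟨a, ⟨i, rfl⟩, b, ⟨j, rfl⟩, rfl⟩ := hv'
    simpa [vsub_eq_sub] using hx i j
  rw [hv, top_le_iff] at hle
  have hxx : ⟪x, x⟫_ℝ = 0 := by
    have : x ∈ LinearMap.ker (innerₛₗ ℝ x) := hle ▸ Submodule.mem_top
    simpa using this
  exact inner_self_eq_zero.mp hxx

/-- Two spanning frameworks sharing an equilibrium stress matrix of maximal rank
`n - d - 1` are related by an invertible affine transformation. -/
theorem shared_max_rank_stress_affine (n d : ℕ) (hnd : n ≥ d + 2)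
    (G : SimpleGraph (Fin n)) (p q : Config n d)
    (hp : affineSpan ℝ (Set.range p) = ⊤) (hq : affineSpan ℝ (Set.range q) = ⊤)
    (Ω : Matrix (Fin n) (Fin n) ℝ) (hrank : Ω.rank = n - d - 1)
    (hΩp : IsEquilibriumStressMatrix G p Ω) (hΩq : IsEquilibriumStressMatrix G q Ω) :
    ∃ (M : EuclideanSpace ℝ (Fin d) ≃ₗ[ℝ] EuclideanSpace ℝ (Fin d))
      (t : EuclideanSpace ℝ (Fin d)), ∀ i, q i = M (p i) + t := by
  classical
  obtain ⟨⟨hsym, hzero, hones⟩, heqp⟩ := hΩp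
  obtain ⟨_, heqq⟩ := hΩq
  -- kernel dimension
  have hkerdim : Module.finrank ℝ (LinearMap.ker Ω.mulVecLin) = d + 1 := by
    have h1 := LinearMap.finrank_range_add_finrank_ker Ω.mulVecLin
    rw [Module.finrank_fin_fun] at h1
    have h2 : Module.finrank ℝ (LinearMap.range Ω.mulVecLin) = n - d - 1 := hrank
    omega
  -- the affine lift of p
  let T : (ℝ × EuclideanSpace ℝ (Fin d)) →ₗ[ℝ] (Fin n → ℝ) :=
    { toFun := fun cx j => cx.1 + ⟪cx.2, p j⟫_ℝ
      map_add' := by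
        intro a b; funext j
        show (a+b).1 + ⟪(a+b).2, p j⟫_ℝ = (a.1 + ⟪a.2, p j⟫_ℝ) + (b.1 + ⟪b.2, p j⟫_ℝ)
        rw [Prod.fst_add, Prod.snd_add, inner_add_left]; ring
      map_smul' := by
        intro c a; funext j
        show (c • a).1 + ⟪(c • a).2, p j⟫_ℝ = c * (a.1 + ⟪a.2, p j⟫_ℝ)
        rw [Prod.smul_fst, Prod.smul_snd, real_inner_smul_left, smul_eq_mul]; ring }
  have hTapp : ∀ (cx : ℝ × EuclideanSpace ℝ (Fin d)) j, T cx j = cx.1 + ⟪cx.2, p j⟫_ℝ :=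
    fun _ _ => rfl
  have hTinj : Function.Injective T := by
    rw [← LinearMap.ker_eq_bot, LinearMap.ker_eq_bot']
    intro cx hcx
    have h0 : ∀ j, cx.1 + ⟪cx.2, p j⟫_ℝ = 0 := fun j => congrFun hcx j
    have hx2 : cx.2 = 0 := by
      refine aux_inner_zero p hp cx.2 fun i j => ?_
      have hi := h0 i; have hj := h0 j
      rw [inner_sub_right]; linarith
    have hx1 : cx.1 = 0 := by
      have := h0 ⟨0, by omega⟩
      simpa [hx2] using this
    exact Prod.ext hx1 hx2
  have hTK : LinearMap.range T ≤ LinearMap.ker Ω.mulVecLin := by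
    rintro v ⟨⟨c, x⟩, rfl⟩
    rw [LinearMap.mem_ker]
    funext i
    have hrow : ∑ j, Ω i j = 0 := by
      have := congrFun hones i
      simpa [Matrix.mulVec, dotProduct] using this
    have heq : ∑ j, Ω i j • p j = 0 := heqp i
    show ∑ j, Ω i j * ((c, x).1 + ⟪(c, x).2, p j⟫_ℝ) = 0
    have hc : ∑ j, Ω i j * (c + ⟪x, p j⟫_ℝ)
        = (∑ j, Ω i j) * c + ⟪x, ∑ j, Ω i j • p j⟫_ℝ := by
      rw [inner_sum, Finset.sum_mul]
      rw [← Finset.sum_add_distrib]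
      congr 1; funext j
      rw [real_inner_smul_right]; ring
    rw [hc, hrow, heq]
    simp
  have hrange : LinearMap.range T = LinearMap.ker Ω.mulVecLin := by
    apply Submodule.eq_of_le_of_finrank_eq hTK
    rw [LinearMap.finrank_range_of_inj hTinj, hkerdim]
    simp [Module.finrank_prod, finrank_euclideanSpace_fin]
    omega
  -- coordinates of q lie in the kernel, hence in the range of T
  have hqk : ∀ k : Fin d, ∃ cx : ℝ × EuclideanSpace ℝ (Fin d),
      ∀ j, q j k = cx.1 + ⟪cx.2, p j⟫_ℝ := by
    intro k
    have hmem : (fun j => q j k) ∈ LinearMap.ker Ω.mulVecLin := by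
      rw [LinearMap.mem_ker]
      funext i
      have h2 : (∑ j, Ω i j • q j) k = (0 : EuclideanSpace ℝ (Fin d)) k := by
        rw [heqq i]
      have h3 : ∀ (v : Fin n → EuclideanSpace ℝ (Fin d)), (∑ j, v j) k = ∑ j, v j k :=
        fun v => by rw [WithLp.ofLp_sum]; exact Finset.sum_apply k Finset.univ _
      rw [h3] at h2
      show ∑ j, Ω i j * q j k = 0
      exact h2
    rw [← hrange] at hmem
    obtain ⟨cx, hcx⟩ := hmem
    exact ⟨cx, fun j => (congrFun hcx j).symm⟩
  choose cx hcx using hqk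
  -- build the affine map
  let M₀ : EuclideanSpace ℝ (Fin d) →ₗ[ℝ] EuclideanSpace ℝ (Fin d) :=
    { toFun := fun y => WithLp.toLp 2 (fun k => ⟪(cx k).2, y⟫_ℝ)
      map_add' := by
        intro a b; ext k
        show ⟪(cx k).2, a + b⟫_ℝ = ⟪(cx k).2, a⟫_ℝ + ⟪(cx k).2, b⟫_ℝ
        rw [inner_add_right]
      map_smul' := by
        intro c a; ext k
        show ⟪(cx k).2, c • a⟫_ℝ = c * ⟪(cx k).2, a⟫_ℝ
        rw [real_inner_smul_right] }
  let t : EuclideanSpace ℝ (Fin d) := WithLp.toLp 2 (fun k => (cx k).1)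
  have hqt : ∀ i, q i = M₀ (p i) + t := by
    intro i
    ext k
    have := hcx k i
    show q i k = ⟪(cx k).2, p i⟫_ℝ + (cx k).1
    linarith
  have hsurj : Function.Surjective M₀ := by
    rw [← LinearMap.range_eq_top, ← top_le_iff]
    have hvq : vectorSpan ℝ (Set.range q) = ⊤ :=
      AffineSubspace.vectorSpan_eq_top_of_affineSpan_eq_top ℝ _ _ hq
    rw [← hvq, vectorSpan_def, Submodule.span_le]
    rintro v hv'
    rw [Set.mem_vsub] at hv'
    obtain ⟨a, ⟨i, rfl⟩, b, ⟨j, rfl⟩, rfl⟩ := hv'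
    refine ⟨p i - p j, ?_⟩
    rw [map_sub, hqt i, hqt j, vsub_eq_sub]
    abel
  have hinj : Function.Injective M₀ := LinearMap.injective_iff_surjective.mpr hsurj
  exact ⟨LinearEquiv.ofBijective M₀ ⟨hinj, hsurj⟩, t, hqt⟩
end

section
/- Let n ≥ d + 2, let G be a graph on Fin n, and let Ω be a stress matrix for G (symmetric, zero at non-edge off-diagonal entries, all-ones vector in the kernel) with rank Ω ≤ n − d − 1. Then there exists a configuration p : Fin n → ℝ^d whose points affinely span ℝ^d such that Ω is an equilibrium stress matrix for (G,p). -/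
open scoped InnerProductSpace

lemma exists_li_head {V : Type*} [AddCommGroup V] [Module ℝ V] [FiniteDimensional ℝ V]
    (x : V) (hx : x ≠ 0) : ∀ k, k + 1 ≤ Module.finrank ℝ V →
    ∃ v : Fin (k+1) → V, LinearIndependent ℝ v ∧ v 0 = x := by
  intro k
  induction k with
  | zero => exact fun _ => ⟨fun _ => x,
      by haveI : Unique (Fin 1) := inferInstance; exact linearIndependent_unique_iff.mpr hx, rfl⟩
  | succ k ih =>
    intro h
    obtain ⟨v, hv, hv0⟩ := ih (by omega)
    obtain ⟨y, hy⟩ := exists_linearIndependent_snoc_of_lt_finrank hv (by omega)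
    refine ⟨Fin.snoc v y, hy, ?_⟩
    have : (0 : Fin (k+2)) = Fin.castSucc 0 := rfl
    rw [this, Fin.snoc_castSucc, hv0]

/-- Every stress matrix for `G` of rank at most `n - d - 1` is the equilibrium stress
matrix of some framework whose points affinely span `ℝ^d`. -/
theorem stress_has_spanning_kernel_framework (n d : ℕ) (hnd : n ≥ d + 2)
    (G : SimpleGraph (Fin n)) (Ω : Matrix (Fin n) (Fin n) ℝ)
    (hΩ : IsStressMatrix G Ω) (hrank : Ω.rank ≤ n - d - 1) :
    ∃ p : Config n d, affineSpan ℝ (Set.range p) = ⊤ ∧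
      IsEquilibriumStressMatrix G p Ω := by
  classical
  set K := LinearMap.ker Ω.mulVecLin with hKdef
  have h1 : (fun _ => (1:ℝ)) ∈ K := by
    simp [hKdef, LinearMap.mem_ker, Matrix.mulVecLin_apply, hΩ.2.2]
  have hfr : Ω.rank + Module.finrank ℝ K = n := by
    have := LinearMap.finrank_range_add_finrank_ker Ω.mulVecLin
    rw [Matrix.rank]
    simpa using this
  have hdim : d + 1 ≤ Module.finrank ℝ K := by omega
  have hx : (⟨fun _ => (1:ℝ), h1⟩ : K) ≠ 0 := by
    intro h
    have := congrFun (congrArg Subtype.val h) ⟨0, by omega⟩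
    simp at this
  obtain ⟨v, hv, hv0⟩ := exists_li_head _ hx d hdim
  set u : Fin (d+1) → (Fin n → ℝ) := fun k => (v k : Fin n → ℝ) with hu_def
  have hu : LinearIndependent ℝ u := hv.map' K.subtype K.ker_subtype
  have hu0 : u 0 = fun _ => 1 := congrArg Subtype.val hv0
  have huK : ∀ k, Ω.mulVec (u k) = 0 := fun k => (v k).2
  set p : Config n d :=
    fun j => (WithLp.equiv 2 (Fin d → ℝ)).symm (fun k => u k.succ j) with hp_def
  have hpk : ∀ j k, p j k = u k.succ j := fun j k => rfl
  refine ⟨p, ?_, ⟨hΩ, ?_⟩⟩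
  · -- affine span is everything
    have hne : (Set.range p).Nonempty := ⟨p ⟨0, by omega⟩, Set.mem_range_self _⟩
    rw [AffineSubspace.affineSpan_eq_top_iff_vectorSpan_eq_top_of_nonempty ℝ _ _ hne]
    by_contra hW
    have hWo : (vectorSpan ℝ (Set.range p))ᗮ ≠ ⊥ := by
      simpa [Submodule.orthogonal_eq_bot_iff] using hW
    obtain ⟨c, hcW, hc0⟩ := Submodule.exists_mem_ne_zero_of_ne_bot hWo
    set j0 : Fin n := ⟨0, by omega⟩
    have horth : ∀ j, ⟪p j - p j0, c⟫_ℝ = 0 := fun j =>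
      hcW _ (vsub_mem_vectorSpan ℝ (Set.mem_range_self j) (Set.mem_range_self j0))
    set a : ℝ := ⟪p j0, c⟫_ℝ with ha
    have hconst : ∀ j, ⟪p j, c⟫_ℝ = a := by
      intro j
      have := horth j
      rw [inner_sub_left] at this
      linarith
    set g : Fin (d+1) → ℝ := Fin.cons (-a) (fun k => c k) with hg
    have hrel : ∑ k, g k • u k = 0 := by
      funext j
      have h1 : (∑ k, g k • u k) j = ∑ k, g k * u k j := by
        simp [Finset.sum_apply]
      rw [h1, Fin.sum_univ_succ]
      have h2 : ∑ k : Fin d, g k.succ * u k.succ j = ⟪p j, c⟫_ℝ := by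
        rw [PiLp.inner_apply]
        refine Finset.sum_congr rfl fun k _ => ?_
        simp [hg, Fin.cons_succ, hpk, mul_comm]
      rw [h2, hconst j]
      simp [hg, hu0]
    have hz := Fintype.linearIndependent_iff.mp hu g hrel
    apply hc0
    ext k
    simpa [hg, Fin.cons_succ] using hz k.succ
  · -- equilibrium
    intro i
    ext k
    set L := WithLp.linearEquiv 2 ℝ (Fin d → ℝ) with hL
    have h1 : (∑ j, Ω i j • p j) k = ∑ j, Ω i j * u k.succ j := by
      have e1 : L (∑ j, Ω i j • p j) = ∑ j, Ω i j • L (p j) := by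
        rw [map_sum]; simp
      have e2 : (∑ j, Ω i j • p j) k = (∑ j, Ω i j • L (p j)) k := congrFun e1 k
      rw [e2, Finset.sum_apply]
      refine Finset.sum_congr rfl fun j _ => ?_
      simp [hL, hpk, WithLp.linearEquiv]
    have h2 : Ω.mulVec (u k.succ) i = 0 := congrFun (huK k.succ) i
    rw [h1]
    simpa [Matrix.mulVec, dotProduct] using h2
end

section
/- Let n ≥ d + 2, let G be a graph on Fin n, and let v : Fin n → ℝ^(n−d−1) be a centered general position orthogonal representation of G: ⟨v i, v j⟩ = 0 whenever i ≠ j and {i,j} is not an edge of G; every subset of the v i of size at most n − d − 1 is linearly independent; and Σ_i v i = 0. Then the Gram matrix Ω given by Ω i j = ⟨v i, v j⟩ is a positive semidefinite stress matrix for G of rank exactly n − d − 1 (in particular, Ω is symmetric, Ω i j = 0 at non-edge off-diagonal entries, and the all-ones vector lies in its kernel). -/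
open scoped InnerProductSpace

private theorem aux_rank (n m : ℕ) (v : Fin n → EuclideanSpace ℝ (Fin m))
    (hm : m ≤ n)
    (hgen : ∀ S : Finset (Fin n), S.card ≤ m → LinearIndependent ℝ (fun i : S => v i.1)) :
    (Matrix.of fun i k => v i k : Matrix (Fin n) (Fin m) ℝ).rank = m := by
  open Module in
  rw [Matrix.rank_eq_finrank_span_row]
  obtain ⟨S, -, hS⟩ := Finset.exists_subset_card_eq (by simpa using hm :
    m ≤ (Finset.univ : Finset (Fin n)).card)
  have hLI : LinearIndependent ℝ (fun i : S => ((WithLp.linearEquiv 2 ℝ (Fin m → ℝ)) (v i.1))) :=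
    (hgen S hS.le).map' (WithLp.linearEquiv 2 ℝ (Fin m → ℝ)).toLinearMap (LinearEquiv.ker _)
  refine le_antisymm ?_ ?_
  · have := Submodule.finrank_le (Submodule.span ℝ
      (Set.range (Matrix.of fun i k => v i k : Matrix (Fin n) (Fin m) ℝ)))
    exact this.trans_eq (by simp)
  · have h1 : finrank ℝ (Submodule.span ℝ
        (Set.range (fun i : S => (WithLp.linearEquiv 2 ℝ (Fin m → ℝ)) (v i.1)))) = m := by
      rw [finrank_span_eq_card hLI]
      simpa using hS
    refine h1.symm.trans_le (Submodule.finrank_mono (Submodule.span_mono ?_))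
    rintro x ⟨i, rfl⟩
    exact ⟨i.1, rfl⟩

/-- The Gram matrix of a centered general position orthogonal representation of `G` in
`ℝ^(n-d-1)` is a PSD stress matrix for `G` of rank exactly `n - d - 1`. -/
theorem gram_of_centered_gor_is_stress (n d : ℕ) (hnd : n ≥ d + 2)
    (G : SimpleGraph (Fin n)) (v : Fin n → EuclideanSpace ℝ (Fin (n - d - 1)))
    (horth : ∀ i j, i ≠ j → ¬ G.Adj i j → ⟪v i, v j⟫_ℝ = 0)
    (hgen : ∀ S : Finset (Fin n), S.card ≤ n - d - 1 →
      LinearIndependent ℝ (fun i : S => v i.1))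
    (hcent : ∑ i, v i = 0) :
    IsStressMatrix G (Matrix.of fun i j => ⟪v i, v j⟫_ℝ) ∧
    (Matrix.of fun i j => ⟪v i, v j⟫_ℝ).PosSemidef ∧
    (Matrix.of fun i j => ⟪v i, v j⟫_ℝ).rank = n - d - 1 := by
  open Matrix in
  set A : Matrix (Fin n) (Fin (n - d - 1)) ℝ := Matrix.of fun i k => v i k with hA
  have hMA : (Matrix.of fun i j => ⟪v i, v j⟫_ℝ) = A * Aᵀ := by
    ext i j
    simp [hA, Matrix.mul_apply, PiLp.inner_apply, mul_comm]
  refine ⟨⟨?_, ?_, ?_⟩, ?_, ?_⟩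
  · ext i j
    simp only [Matrix.transpose_apply, Matrix.of_apply]
    exact real_inner_comm _ _
  · intro i j hij hadj
    simpa using horth i j hij hadj
  · funext i
    have : ⟪v i, ∑ j, v j⟫_ℝ = 0 := by rw [hcent, inner_zero_right]
    rw [inner_sum] at this
    simpa [Matrix.mulVec, dotProduct] using this
  · rw [hMA]
    have := Matrix.posSemidef_self_mul_conjTranspose A
    simpa using this
  · rw [hMA, Matrix.rank_self_mul_transpose]
    exact aux_rank n (n - d - 1) v (le_trans (Nat.sub_le _ _) (Nat.sub_le _ _)) hgen
end

section
/- Let n ≥ d + 2 and let v : Fin n → ℝ^(n−d−1) be a family of vectors in general linear position (every subset of size at most n − d − 1 is linearly independent). Let K = {α : Fin n → ℝ | Σ_i α i • v i = 0}. Then K is a linear subspace of dimension d + 1; moreover, if K contains a vector all of whose coordinates are nonzero, then the set of such full-rank vectors is an open dense subset of K. -/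
open scoped InnerProductSpace

/-- For vectors in general position in `ℝ^(n-d-1)`, the space of centering coefficient
vectors has dimension `d + 1`, and if it contains a vector with all coordinates nonzero,
the full-rank centering vectors form an open dense subset. -/
theorem centering_maps_dimension (n d : ℕ) (hnd : n ≥ d + 2)
    (v : Fin n → EuclideanSpace ℝ (Fin (n - d - 1)))
    (hgen : ∀ S : Finset (Fin n), S.card ≤ n - d - 1 →
      LinearIndependent ℝ (fun i : S => v i.1)) :
    ∃ K : Submodule ℝ (Fin n → ℝ),
      (∀ α : Fin n → ℝ, α ∈ K ↔ ∑ i, α i • v i = 0) ∧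
      Module.finrank ℝ K = d + 1 ∧
      ((∃ α : Fin n → ℝ, α ∈ K ∧ ∀ i, α i ≠ 0) →
        IsOpen {α : K | ∀ i, (α : Fin n → ℝ) i ≠ 0} ∧
        Dense {α : K | ∀ i, (α : Fin n → ℝ) i ≠ 0}) := by
  set f : (Fin n → ℝ) →ₗ[ℝ] EuclideanSpace ℝ (Fin (n - d - 1)) :=
    Fintype.linearCombination ℝ v with hf
  refine ⟨LinearMap.ker f, fun α => ?_, ?_, ?_⟩
  · rw [LinearMap.mem_ker, hf, Fintype.linearCombination_apply]
  · -- dimension count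
    -- f is surjective since the v i span
    have hsurj : Function.Surjective f := by
      rw [← LinearMap.range_eq_top]
      have hrange : LinearMap.range f = Submodule.span ℝ (Set.range v) := by
        rw [hf]; exact Fintype.range_linearCombination ℝ v
      -- take a subset of size n - d - 1
      obtain ⟨S, -, hS⟩ := Finset.exists_subset_card_eq
        (s := (Finset.univ : Finset (Fin n))) (n := n - d - 1) (by simp; omega)
      have hli := hgen S (le_of_eq hS)
      have hcard : Fintype.card S = n - d - 1 := by simp [hS]
      have hfr : Module.finrank ℝ (Submodule.span ℝ (Set.range fun i : S => v i.1))
          = n - d - 1 := by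
        rw [finrank_span_eq_card hli, hcard]
      have hle : Submodule.span ℝ (Set.range fun i : S => v i.1)
          ≤ Submodule.span ℝ (Set.range v) :=
        Submodule.span_mono (by rintro x ⟨i, rfl⟩; exact ⟨i.1, rfl⟩)
      have htop : Submodule.span ℝ (Set.range v) = ⊤ := by
        apply Submodule.eq_top_of_finrank_eq
        have h1 : Module.finrank ℝ (EuclideanSpace ℝ (Fin (n - d - 1))) = n - d - 1 := by
          simp
        refine le_antisymm (Submodule.finrank_le _) ?_
        calc Module.finrank ℝ (EuclideanSpace ℝ (Fin (n - d - 1)))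
            = n - d - 1 := h1
          _ = Module.finrank ℝ (Submodule.span ℝ (Set.range fun i : S => v i.1)) := hfr.symm
          _ ≤ Module.finrank ℝ (Submodule.span ℝ (Set.range v)) :=
            Submodule.finrank_mono hle
      rw [hrange, htop]
    have hrn := LinearMap.finrank_range_add_finrank_ker f
    rw [LinearMap.range_eq_top.mpr hsurj] at hrn
    have h1 : Module.finrank ℝ (⊤ : Submodule ℝ (EuclideanSpace ℝ (Fin (n - d - 1))))
        = n - d - 1 := by simp
    have h2 : Module.finrank ℝ (Fin n → ℝ) = n := by simp
    rw [h1, h2] at hrn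
    omega
  · rintro ⟨α₀, hα₀K, hα₀⟩
    constructor
    · have : {α : LinearMap.ker f | ∀ i, (α : Fin n → ℝ) i ≠ 0}
          = ⋂ i, {α : LinearMap.ker f | (α : Fin n → ℝ) i ≠ 0} := by
        ext; simp [Set.mem_iInter]
      rw [this]
      refine isOpen_iInter_of_finite fun i => ?_
      have hc : Continuous fun α : LinearMap.ker f => (α : Fin n → ℝ) i :=
        (continuous_apply i).comp continuous_subtype_val
      exact isOpen_compl_singleton.preimage hc
    · rw [Metric.dense_iff]
      intro x ε hε
      set a : LinearMap.ker f := ⟨α₀, hα₀K⟩ with ha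
      set δ := ε / (‖a‖ + 1) with hδ
      have hδpos : 0 < δ := div_pos hε (by positivity)
      set T : Finset ℝ := Finset.image (fun i => -((x : Fin n → ℝ) i) / α₀ i) Finset.univ
      obtain ⟨t, htI, htT⟩ := (Set.Ioo_infinite hδpos).exists_notMem_finset T
      refine ⟨x + t • a, Metric.mem_ball.mpr ?_, fun i => ?_⟩
      · have : dist (x + t • a) x = ‖t • a‖ := by
          rw [dist_eq_norm]; congr 1; abel
        rw [this]
        have hns : ‖t • a‖ = ‖t‖ * ‖a‖ := norm_smul t a
        rw [hns]
        have ht : |t| < δ := by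
          rw [abs_of_pos htI.1]; exact htI.2
        calc ‖t‖ * ‖a‖ ≤ |t| * (‖a‖ + 1) := by
              apply mul_le_mul_of_nonneg_left (by linarith) (abs_nonneg t)
          _ < δ * (‖a‖ + 1) := by
              apply mul_lt_mul_of_pos_right ht (by positivity)
          _ = ε := by
              rw [hδ]; field_simp
      · have hcoord : ((x + t • a : LinearMap.ker f) : Fin n → ℝ) i
            = (x : Fin n → ℝ) i + t * α₀ i := by
          simp [ha]
        rw [hcoord]
        intro hzero
        apply htT
        have : t = -((x : Fin n → ℝ) i) / α₀ i := by
          rw [eq_div_iff (hα₀ i)]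
          linarith
        rw [this]
        exact Finset.mem_image_of_mem _ (Finset.mem_univ i)
end
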